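/- arXiv:1604.05218 — 4 statements merged into one kernel-verified Lean document; each statement's English description precedes it below -/
import Mathlib

section
/- Let d ≥ 1 and let p be a polynomial in d+1 real variables (with complex coefficients) that is homogeneous of degree n and harmonic, i.e. ∑_{i=1}^{d+1} ∂²p/∂x_i² = 0 identically. Then the indicator function of the upper hemisphere observes p with constant 1/√2: ∫_{S^d ∩ {x_{d+1}>0}} |p(x)|² dσ(x) = ∫_{S^d ∩ {x_{d+1}<0}} |p(x)|² dσ(x) = (1/2) ∫_{S^d} |p(x)|² dσ(x). -/
open MeasureTheory Set Metric
open scoped Pointwise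

private lemma sph_eval_neg_aux {σ : Type*} {n : ℕ} {p : MvPolynomial σ ℂ}
    (h : p.IsHomogeneous n) (x : σ → ℂ) :
    MvPolynomial.eval (fun i => - x i) p = (-1) ^ n * MvPolynomial.eval x p := by
  rw [MvPolynomial.eval_eq, MvPolynomial.eval_eq, Finset.mul_sum]
  refine Finset.sum_congr rfl fun d hd => ?_
  have hdeg : d.degree = n := by
    have := h (MvPolynomial.mem_support_iff.mp hd)
    rw [Finsupp.degree_eq_weight_one]; exact this
  have : ∏ i ∈ d.support, (- x i) ^ d i
      = (-1 : ℂ) ^ d.degree * ∏ i ∈ d.support, x i ^ d i := by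
    rw [Finsupp.degree_apply, ← Finset.prod_pow_eq_pow_sum, ← Finset.prod_mul_distrib]
    exact Finset.prod_congr rfl fun i _ => neg_pow _ _
  rw [this, hdeg]; ring

section Aux

variable {d : ℕ}

private noncomputable def sphNeg (d : ℕ) :
    Metric.sphere (0 : EuclideanSpace ℝ (Fin (d + 1))) 1 ≃ᵐ
      Metric.sphere (0 : EuclideanSpace ℝ (Fin (d + 1))) 1 where
  toFun x := -x
  invFun x := -x
  left_inv x := neg_neg x
  right_inv x := neg_neg x
  measurable_toFun := continuous_neg.measurable
  measurable_invFun := continuous_neg.measurable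

private lemma sphNeg_map (d : ℕ) :
    Measure.map (sphNeg d)
        (volume : Measure (EuclideanSpace ℝ (Fin (d + 1)))).toSphere
      = (volume : Measure (EuclideanSpace ℝ (Fin (d + 1)))).toSphere := by
  ext s hs
  rw [(sphNeg d).map_apply s]
  rw [Measure.toSphere_apply' _ ((sphNeg d).measurable hs),
    Measure.toSphere_apply' _ hs]
  have himg : (Subtype.val '' ((sphNeg d) ⁻¹' s))
      = -(Subtype.val '' s) := by
    ext y
    constructor
    · rintro ⟨x, hx, rfl⟩
      exact ⟨-x, hx, by simp⟩
    · rintro ⟨z, hz, hzy⟩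
      exact ⟨-z, by simpa [sphNeg] using hz, by simp [hzy]⟩
  rw [himg, Set.smul_neg, Measure.measure_neg]

end Aux

/-- Observability of spherical harmonics by the upper hemisphere: a harmonic
polynomial `p` in `d+1` variables, homogeneous of degree `n`, has its `L²` mass
on the unit sphere `S^d` equally distributed on the two open hemispheres. -/
theorem spherical_harmonic_equidistribution
    (d n : ℕ) (hd : 1 ≤ d) (p : MvPolynomial (Fin (d + 1)) ℂ)
    (hhom : p.IsHomogeneous n)
    (hharm : (∑ i : Fin (d + 1),
      MvPolynomial.pderiv i (MvPolynomial.pderiv i p)) = 0) :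
    (∫ x in {x : Metric.sphere (0 : EuclideanSpace ℝ (Fin (d + 1))) 1 |
        0 < (x : EuclideanSpace ℝ (Fin (d + 1))) (Fin.last d)},
      ‖MvPolynomial.eval
        (fun i => ((x : EuclideanSpace ℝ (Fin (d + 1))) i : ℂ)) p‖ ^ 2
      ∂(volume : Measure (EuclideanSpace ℝ (Fin (d + 1)))).toSphere)
    = (∫ x in {x : Metric.sphere (0 : EuclideanSpace ℝ (Fin (d + 1))) 1 |
        (x : EuclideanSpace ℝ (Fin (d + 1))) (Fin.last d) < 0},
      ‖MvPolynomial.eval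
        (fun i => ((x : EuclideanSpace ℝ (Fin (d + 1))) i : ℂ)) p‖ ^ 2
      ∂(volume : Measure (EuclideanSpace ℝ (Fin (d + 1)))).toSphere)
    ∧
    (∫ x in {x : Metric.sphere (0 : EuclideanSpace ℝ (Fin (d + 1))) 1 |
        0 < (x : EuclideanSpace ℝ (Fin (d + 1))) (Fin.last d)},
      ‖MvPolynomial.eval
        (fun i => ((x : EuclideanSpace ℝ (Fin (d + 1))) i : ℂ)) p‖ ^ 2
      ∂(volume : Measure (EuclideanSpace ℝ (Fin (d + 1)))).toSphere)
    = (1 / 2) * ∫ x : Metric.sphere (0 : EuclideanSpace ℝ (Fin (d + 1))) 1,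
      ‖MvPolynomial.eval
        (fun i => ((x : EuclideanSpace ℝ (Fin (d + 1))) i : ℂ)) p‖ ^ 2
      ∂(volume : Measure (EuclideanSpace ℝ (Fin (d + 1)))).toSphere := by
  set μ := (volume : Measure (EuclideanSpace ℝ (Fin (d + 1)))).toSphere with hμ
  set f : Metric.sphere (0 : EuclideanSpace ℝ (Fin (d + 1))) 1 → ℝ :=
    fun x => ‖MvPolynomial.eval
      (fun i => ((x : EuclideanSpace ℝ (Fin (d + 1))) i : ℂ)) p‖ ^ 2 with hf
  set U : Set (Metric.sphere (0 : EuclideanSpace ℝ (Fin (d + 1))) 1) :=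
    {x | 0 < (x : EuclideanSpace ℝ (Fin (d + 1))) (Fin.last d)} with hUdef
  set L : Set (Metric.sphere (0 : EuclideanSpace ℝ (Fin (d + 1))) 1) :=
    {x | (x : EuclideanSpace ℝ (Fin (d + 1))) (Fin.last d) < 0} with hLdef
  have hcoord : Continuous fun x : Metric.sphere (0 : EuclideanSpace ℝ (Fin (d + 1))) 1 =>
      (x : EuclideanSpace ℝ (Fin (d + 1))) (Fin.last d) :=
    (EuclideanSpace.proj (Fin.last d)).continuous.comp continuous_subtype_val
  have hU : MeasurableSet U := (isOpen_lt continuous_const hcoord).measurableSet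
  have hL : MeasurableSet L := (isOpen_lt hcoord continuous_const).measurableSet
  have hfc : Continuous f := by
    apply Continuous.pow
    apply Continuous.norm
    have h1 : Continuous fun x : Metric.sphere (0 : EuclideanSpace ℝ (Fin (d + 1))) 1 =>
        (fun i => ((x : EuclideanSpace ℝ (Fin (d + 1))) i : ℂ)) :=
      continuous_pi fun i => Complex.continuous_ofReal.comp <|
        (EuclideanSpace.proj i).continuous.comp continuous_subtype_val
    exact (MvPolynomial.continuous_eval (p := p)).comp h1
  have hfi : Integrable f μ := by
    apply hfc.integrable_of_hasCompactSupport
    exact HasCompactSupport.of_compactSpace f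
  have hfneg : ∀ x, f (-x) = f x := by
    intro x
    have hx : (fun i => (((-x : Metric.sphere (0 : EuclideanSpace ℝ (Fin (d + 1))) 1) :
        EuclideanSpace ℝ (Fin (d + 1))) i : ℂ))
        = fun i => -(((x : EuclideanSpace ℝ (Fin (d + 1))) i : ℂ)) := by
      funext i
      simp
    simp only [hf, hx, sph_eval_neg_aux hhom]
    rw [norm_mul, norm_pow, norm_neg, norm_one, one_pow, one_mul]
  -- upper = lower
  have h1 : (∫ x in U, f x ∂μ) = ∫ x in L, f x ∂μ := by
    conv_lhs => rw [hμ, ← sphNeg_map d]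
    rw [setIntegral_map_equiv]
    have hpre : (sphNeg d) ⁻¹' U = L := by
      ext x
      simp only [hUdef, hLdef, mem_preimage, mem_setOf_eq, sphNeg,
        MeasurableEquiv.coe_mk, Equiv.coe_fn_mk]
      have : ((-x : Metric.sphere (0 : EuclideanSpace ℝ (Fin (d + 1))) 1) :
          EuclideanSpace ℝ (Fin (d + 1))) (Fin.last d)
          = -((x : EuclideanSpace ℝ (Fin (d + 1))) (Fin.last d)) := by simp
      rw [this]
      exact neg_pos
    rw [hpre]
    exact setIntegral_congr_fun hL fun x _ => hfneg x
  refine ⟨h1, ?_⟩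
  -- equator is null
  have hZ : MeasurableSet (U ∪ L)ᶜ := (hU.union hL).compl
  have hzero : μ (U ∪ L)ᶜ = 0 := by
    rw [hμ, Measure.toSphere_apply' _ hZ]
    have hsub : (Ioo (0:ℝ) 1 • (Subtype.val '' (U ∪ L)ᶜ))
        ⊆ (LinearMap.ker (EuclideanSpace.projₗ (𝕜 := ℝ) (Fin.last d)) :
            Submodule ℝ (EuclideanSpace ℝ (Fin (d + 1)))) := by
      rintro y ⟨c, hc, z, ⟨x, hx, rfl⟩, rfl⟩
      have hx0 : (x : EuclideanSpace ℝ (Fin (d + 1))) (Fin.last d) = 0 := by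
        simp only [hUdef, hLdef, mem_compl_iff, mem_union, mem_setOf_eq, not_or, not_lt] at hx
        linarith [hx.1, hx.2]
      show (c • (x : EuclideanSpace ℝ (Fin (d + 1)))) (Fin.last d) = 0
      simp [hx0]
    have hker : (LinearMap.ker (EuclideanSpace.projₗ (𝕜 := ℝ) (Fin.last d)) :
        Submodule ℝ (EuclideanSpace ℝ (Fin (d + 1)))) ≠ ⊤ := by
      intro h
      have : (EuclideanSpace.single (Fin.last d) (1:ℝ) :
          EuclideanSpace ℝ (Fin (d + 1))) ∈
          LinearMap.ker (EuclideanSpace.projₗ (𝕜 := ℝ) (Fin.last d)) := by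
        rw [h]; trivial
      simp [LinearMap.mem_ker] at this
    rw [measure_mono_null hsub (Measure.addHaar_submodule _ _ hker), mul_zero]
  -- split the full integral
  have hsplit : (∫ x, f x ∂μ) = (∫ x in U, f x ∂μ) + ∫ x in L, f x ∂μ := by
    have hae : ((U ∪ L : Set (Metric.sphere (0 : EuclideanSpace ℝ (Fin (d + 1))) 1))) =ᵐ[μ]
        (univ : Set (Metric.sphere (0 : EuclideanSpace ℝ (Fin (d + 1))) 1)) := by
      rw [ae_eq_univ]
      exact hzero
    have hdisj : Disjoint U L := by
      rw [disjoint_left]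
      rintro x hx hx'
      simp only [hUdef, hLdef, mem_setOf_eq] at hx hx'
      linarith
    rw [← setIntegral_univ (μ := μ) (f := f), ← Measure.restrict_congr_set hae,
      setIntegral_union hdisj hL hfi.integrableOn hfi.integrableOn]
  rw [hsplit, ← h1]
  ring
end

section
/- Let ρ : ℝ → ℝ be continuous with 0 < ρ(x) ≤ 1 for all x and ρ(x) < 1 for all x ≠ 0. Let λ ≥ 0 and k ∈ ℝ with k ≠ 0 and |k| ≥ λ. Suppose w : ℝ → ℂ is twice continuously differentiable, w and w' belong to L²(ℝ), w satisfies −w''(x) + k² w(x) = λ² ρ(x)² w(x) for all x ∈ ℝ, and w(x) → 0, w'(x) → 0 as |x| → ∞. Then w is identically zero. -/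
open Filter MeasureTheory

/-- Key real ODE lemma: if `u'' = q·u` with `q ≥ 0`, and `u, u'` tend to `0`
at `±∞`, then `u ≡ 0`. Proof: `W = u·u'` is nondecreasing and tends to `0`
at both ends, hence vanishes; then `u'² + q u² = W' = 0` forces `u' ≡ 0`. -/
lemma key_ode_lemma (q : ℝ → ℝ) (hq : ∀ x, 0 ≤ q x) (u : ℝ → ℝ)
    (hu : ContDiff ℝ 2 u) (hequ : ∀ x, deriv (deriv u) x = q x * u x)
    (h0 : Tendsto u atTop (nhds 0)) (h0' : Tendsto u atBot (nhds 0))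
    (h1 : Tendsto (deriv u) atTop (nhds 0)) (h1' : Tendsto (deriv u) atBot (nhds 0)) :
    ∀ x, u x = 0 := by
  have hu1 : Differentiable ℝ u := hu.differentiable two_ne_zero
  have hu2 : Differentiable ℝ (deriv u) := by
    have h2 : ContDiff ℝ (1 + 1 : ℕ) u := by exact_mod_cast hu
    exact ((contDiff_succ_iff_deriv.mp h2).2.2).differentiable one_ne_zero
  set W : ℝ → ℝ := fun x => u x * deriv u x with hW
  have hW' : ∀ x, HasDerivAt W (deriv u x * deriv u x + u x * (q x * u x)) x := by
    intro x
    have := (hu1 x).hasDerivAt.mul ((hu2 x).hasDerivAt)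
    rw [hequ x] at this; exact this
  have hWdiff : Differentiable ℝ W := fun x => ((hW' x).differentiableAt)
  have hWderiv : ∀ x, deriv W x = deriv u x * deriv u x + u x * (q x * u x) :=
    fun x => (hW' x).deriv
  have hmono : Monotone W := by
    apply monotone_of_deriv_nonneg hWdiff
    intro x
    rw [hWderiv x]
    nlinarith [sq_nonneg (deriv u x), sq_nonneg (u x), mul_nonneg (hq x) (sq_nonneg (u x))]
  have hWtop : Tendsto W atTop (nhds 0) := by simpa using h0.mul h1
  have hWbot : Tendsto W atBot (nhds 0) := by simpa using h0'.mul h1'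
  have hW0 : ∀ x, W x = 0 := by
    intro x
    have hle : W x ≤ 0 :=
      ge_of_tendsto hWtop (eventually_atTop.2 ⟨x, fun y hy => hmono hy⟩)
    have hge : (0 : ℝ) ≤ W x :=
      le_of_tendsto hWbot (eventually_atBot.2 ⟨x, fun y hy => hmono hy⟩)
    linarith
  have hu'0 : ∀ x, deriv u x = 0 := by
    intro x
    have hc : HasDerivAt W 0 x := by
      have : W = fun _ => (0 : ℝ) := funext hW0
      rw [this]; exact hasDerivAt_const x 0
    have heqd : deriv u x * deriv u x + u x * (q x * u x) = 0 :=
      (hW' x).unique hc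
    nlinarith [mul_nonneg (hq x) (sq_nonneg (u x)), sq_nonneg (deriv u x)]
  intro x
  have hconst : ∀ y, u y = u x := fun y => is_const_of_deriv_eq_zero hu1 hu'0 y x
  have : Tendsto u atTop (nhds (u x)) := by
    have : u = fun _ => u x := funext hconst
    rw [this]; exact tendsto_const_nhds
  exact tendsto_nhds_unique this h0

lemma derivCLMComp_aux (w : ℝ → ℂ) (hw1 : Differentiable ℝ w) (L : ℂ →L[ℝ] ℝ) :
    deriv (fun y => L (w y)) = fun x => L (deriv w x) := by
  funext x
  exact (L.hasFDerivAt.comp_hasDerivAt x ((hw1 x).hasDerivAt)).deriv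

lemma comp_key (w : ℝ → ℂ) (hw : ContDiff ℝ 2 w) (L : ℂ →L[ℝ] ℝ) (q : ℝ → ℝ)
    (heqw : ∀ x, deriv (deriv w) x = (q x : ℝ) • w x) :
    ∀ x, deriv (deriv (fun y => L (w y))) x = q x * L (w x) := by
  have hw1 : Differentiable ℝ w := hw.differentiable two_ne_zero
  have hw2 : Differentiable ℝ (deriv w) := by
    have h2 : ContDiff ℝ (1 + 1 : ℕ) w := by exact_mod_cast hw
    exact ((contDiff_succ_iff_deriv.mp h2).2.2).differentiable one_ne_zero
  have hd1 : deriv (fun y => L (w y)) = fun x => L (deriv w x) :=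
    derivCLMComp_aux w hw1 L
  intro x
  rw [hd1]
  have := (L.hasFDerivAt.comp_hasDerivAt x ((hw2 x).hasDerivAt)).deriv
  rw [show (fun x => L (deriv w x)) = ⇑L ∘ deriv w from rfl, this, heqw x, L.map_smul]
  simp [smul_eq_mul]

/-- On a Zoll surface of revolution, there is no separated Laplacian
eigenfunction with rotation number `|k| ≥ λ`, `k ≠ 0`: any decaying
`L²` solution of `-w'' + k²w = λ²ρ²w` vanishes identically. -/
theorem no_eigenfunction_with_large_rotation_number
    (ρ : ℝ → ℝ) (hρcont : Continuous ρ)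
    (hρpos : ∀ x, 0 < ρ x) (hρle : ∀ x, ρ x ≤ 1)
    (hρlt : ∀ x, x ≠ 0 → ρ x < 1)
    (lam k : ℝ) (hlam : 0 ≤ lam) (hk : k ≠ 0) (hklam : lam ≤ |k|)
    (w : ℝ → ℂ) (hw : ContDiff ℝ 2 w)
    (hwL2 : MemLp w 2 (volume : Measure ℝ))
    (hw'L2 : MemLp (deriv w) 2 (volume : Measure ℝ))
    (heq : ∀ x, -(deriv (deriv w) x) + (k : ℂ) ^ 2 * w x
      = (lam : ℂ) ^ 2 * (ρ x : ℂ) ^ 2 * w x)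
    (hlim_top : Tendsto w atTop (nhds 0))
    (hlim_bot : Tendsto w atBot (nhds 0))
    (hlim'_top : Tendsto (deriv w) atTop (nhds 0))
    (hlim'_bot : Tendsto (deriv w) atBot (nhds 0)) :
    ∀ x, w x = 0 := by
  have hw1 : Differentiable ℝ w := hw.differentiable two_ne_zero
  set q : ℝ → ℝ := fun x => k ^ 2 - lam ^ 2 * ρ x ^ 2 with hqdef
  have hq : ∀ x, 0 ≤ q x := by
    intro x
    have h1 : lam ^ 2 ≤ k ^ 2 := by
      have := sq_abs k
      nlinarith [abs_nonneg k]
    have h2 : ρ x ^ 2 ≤ 1 := by nlinarith [hρpos x, hρle x]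
    have h3 : lam ^ 2 * ρ x ^ 2 ≤ lam ^ 2 := by nlinarith [sq_nonneg lam]
    simp only [hqdef]
    linarith
  have heqw : ∀ x, deriv (deriv w) x = (q x : ℝ) • w x := by
    intro x
    have h := heq x
    rw [Complex.real_smul]
    push_cast [hqdef]
    linear_combination -h
  have main : ∀ (L : ℂ →L[ℝ] ℝ), ∀ x, L (w x) = 0 := by
    intro L
    have hu : ContDiff ℝ 2 (fun y => L (w y)) := L.contDiff.comp hw
    have hdcomp := derivCLMComp_aux w hw1 L
    apply key_ode_lemma q hq _ hu (comp_key w hw L q heqw)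
    · simpa [map_zero, Function.comp_def] using (L.continuous.tendsto 0).comp hlim_top
    · simpa [map_zero, Function.comp_def] using (L.continuous.tendsto 0).comp hlim_bot
    · rw [hdcomp]
      simpa [map_zero, Function.comp_def] using (L.continuous.tendsto 0).comp hlim'_top
    · rw [hdcomp]
      simpa [map_zero, Function.comp_def] using (L.continuous.tendsto 0).comp hlim'_bot
  intro x
  have hre := main Complex.reCLM x
  have him := main Complex.imCLM x
  simp only [Complex.reCLM_apply, Complex.imCLM_apply] at hre him
  exact Complex.ext (by simpa using hre) (by simpa using him)
end

section
/- Let h > 0, let V : ℝ → ℝ be continuous, let Φ : ℝ → ℝ be Lipschitz (so Φ' exists almost everywhere), and let u : ℝ → ℂ be twice continuously differentiable with compact support. Then h² ∫_ℝ |(e^{Φ/h} u)'(x)|² dx + ∫_ℝ ( V(x) − Φ'(x)² ) e^{2Φ(x)/h} |u(x)|² dx = Re ∫_ℝ e^{2Φ(x)/h} ( −h² u''(x) + V(x) u(x) ) · conj(u(x)) dx. -/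
open MeasureTheory Filter Metric Topology

/-! Auxiliary lemmas for the Lithner–Agmon energy identity. -/

private lemma lipschitz_deriv_bound {K : NNReal} {F : ℝ → ℝ} (hF : LipschitzWith K F) (x : ℝ) :
    |deriv F x| ≤ K := by
  by_cases hd : DifferentiableAt ℝ F x
  · have h1 : deriv F x = fderiv ℝ F x 1 := by
      rw [← toSpanSingleton_deriv]; simp
    rw [h1]
    calc ‖fderiv ℝ F x 1‖ ≤ ‖fderiv ℝ F x‖ * ‖(1:ℝ)‖ := (fderiv ℝ F x).le_opNorm 1
      _ ≤ K * 1 := by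
          gcongr
          · exact norm_fderiv_le_of_lipschitz ℝ hF
          · simp
      _ = K := by ring
  · rw [deriv_zero_of_not_differentiableAt hd]; simp

/-- FTC-type statement: the a.e. derivative of a Lipschitz compactly supported
function integrates to zero. -/
private lemma integral_deriv_eq_zero_of_lipschitz {K : NNReal} {F : ℝ → ℝ}
    (hF : LipschitzWith K F) (hFc : HasCompactSupport F) :
    ∫ x : ℝ, deriv F x = 0 := by
  have hFcont : Continuous F := hF.continuous
  have hFi : Integrable F := hFcont.integrable_of_hasCompactSupport hFc
  set S := Metric.cthickening 1 (tsupport F) with hS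
  have hScomp : IsCompact S := hFc.cthickening
  have hSmeas : MeasurableSet S := hScomp.isClosed.measurableSet
  set bound : ℝ → ℝ := S.indicator (fun _ => (K : ℝ)) with hbound
  have hboundi : Integrable bound := by
    refine (integrable_indicator_iff hSmeas).2 ?_
    exact integrableOn_const hScomp.measure_lt_top.ne
  set c : ℕ → ℝ := fun n => ((n : ℝ) + 1)⁻¹ with hc
  have hcpos : ∀ n, 0 < c n := fun n => by positivity
  have hcle : ∀ n, c n ≤ 1 := fun n => by
    rw [hc]
    refine inv_le_one_of_one_le₀ ?_
    have : (0:ℝ) ≤ (n:ℝ) := Nat.cast_nonneg n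
    linarith
  set Fn : ℕ → ℝ → ℝ := fun n x => (c n)⁻¹ * (F (x + c n) - F x) with hFn
  have hFni : ∀ n, Integrable (Fn n) := by
    intro n
    exact ((hFi.comp_add_right (c n)).sub hFi).const_mul _
  have hFnzero : ∀ n, ∫ x, Fn n x = 0 := by
    intro n
    rw [integral_const_mul, integral_sub (hFi.comp_add_right (c n)) hFi,
      integral_add_right_eq_self F (c n), sub_self, mul_zero]
  have hFnbound : ∀ n, ∀ᵐ x : ℝ, ‖Fn n x‖ ≤ bound x := by
    intro n
    refine Filter.Eventually.of_forall fun x => ?_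
    by_cases hx : x ∈ S
    · rw [hbound, Set.indicator_of_mem hx]
      have h1 : |F (x + c n) - F x| ≤ K * |c n| := by
        have := hF.dist_le_mul (x + c n) x
        rw [Real.dist_eq, Real.dist_eq] at this
        simpa using this
      rw [Real.norm_eq_abs, hFn, abs_mul, abs_inv]
      rw [abs_of_pos (hcpos n)] at h1 ⊢
      calc (c n)⁻¹ * |F (x + c n) - F x| ≤ (c n)⁻¹ * (K * c n) := by
            have := (hcpos n)
            gcongr
        _ = K := by have := (hcpos n).ne'; field_simp
    · have hx1 : x ∉ tsupport F := fun hmem => hx (self_subset_cthickening _ hmem)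
      have hx2 : x + c n ∉ tsupport F := by
        intro hmem
        exact hx (mem_cthickening_of_dist_le x (x + c n) 1 _ hmem
          (by rw [Real.dist_eq]; simp [abs_of_pos (hcpos n), hcle n]))
      rw [hbound, Set.indicator_of_notMem hx]
      simp [hFn, image_eq_zero_of_notMem_tsupport hx1, image_eq_zero_of_notMem_tsupport hx2]
  have hae : ∀ᵐ x : ℝ, Filter.Tendsto (fun n => Fn n x) atTop (𝓝 (deriv F x)) := by
    filter_upwards [hF.ae_differentiableAt (μ := volume)] with x hx
    have hd : HasDerivAt F (deriv F x) x := hx.hasDerivAt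
    rw [hasDerivAt_iff_tendsto_slope] at hd
    have hseq : Filter.Tendsto (fun n => x + c n) atTop (𝓝[≠] x) := by
      apply tendsto_nhdsWithin_of_tendsto_nhds_of_eventually_within
      · have : Filter.Tendsto c atTop (𝓝 0) := by
          simpa [hc, one_div] using tendsto_one_div_add_atTop_nhds_zero_nat (𝕜 := ℝ)
        simpa using (tendsto_const_nhds.add this)
      · exact Filter.Eventually.of_forall fun n => by
          simp [Set.mem_setOf_eq, ne_eq]
          positivity
    have := hd.comp hseq
    convert this using 2 with n
    simp only [Function.comp_apply]
    rw [slope_def_field]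
    simp only [hFn]
    field_simp
    rw [add_sub_cancel_left]
  have hlim := tendsto_integral_of_dominated_convergence bound
    (fun n => (hFni n).aestronglyMeasurable) hboundi hFnbound hae
  simp only [hFnzero] at hlim
  exact (tendsto_const_nhds_iff.1 hlim).symm

private lemma exp_sub_exp_abs_le {a b c : ℝ} (ha : a ≤ c) (hb : b ≤ c) :
    |Real.exp a - Real.exp b| ≤ Real.exp c * |a - b| := by
  wlog hab : b ≤ a generalizing a b
  · rw [abs_sub_comm, abs_sub_comm a b]; exact this hb ha (le_of_not_ge hab)
  rw [abs_of_nonneg (sub_nonneg.2 (Real.exp_le_exp.2 hab)), abs_of_nonneg (sub_nonneg.2 hab)]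
  have key : Real.exp (a - b) - 1 ≤ (a - b) * Real.exp (a - b) := by
    have h1 := Real.add_one_le_exp (-(a - b))
    have h2 : Real.exp (a - b) * Real.exp (-(a - b)) = 1 := by
      rw [← Real.exp_add]; simp
    nlinarith [Real.exp_pos (a - b)]
  have he : Real.exp a = Real.exp b * Real.exp (a - b) := by
    rw [← Real.exp_add]; ring_nf
  have hac : Real.exp a ≤ Real.exp c := Real.exp_le_exp.2 ha
  nlinarith [Real.exp_pos b, sub_nonneg.2 hab, Real.exp_pos (a - b)]

private lemma lipschitzWith_mul_of_bounded {f g : ℝ → ℝ} {Kf Kg : NNReal} {Cf Cg : ℝ}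
    (hf : LipschitzWith Kf f) (hg : LipschitzWith Kg g)
    (hCf : ∀ x, |f x| ≤ Cf) (hCg : ∀ x, |g x| ≤ Cg) :
    LipschitzWith (Real.toNNReal (Cf * Kg + Cg * Kf)) (fun x => f x * g x) := by
  have hCf0 : 0 ≤ Cf := (abs_nonneg _).trans (hCf 0)
  have hCg0 : 0 ≤ Cg := (abs_nonneg _).trans (hCg 0)
  apply LipschitzWith.of_dist_le_mul
  intro x y
  rw [Real.dist_eq, Real.dist_eq]
  have hfd : |f x - f y| ≤ Kf * |x - y| := by
    have := hf.dist_le_mul x y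
    rwa [Real.dist_eq, Real.dist_eq] at this
  have hgd : |g x - g y| ≤ Kg * |x - y| := by
    have := hg.dist_le_mul x y
    rwa [Real.dist_eq, Real.dist_eq] at this
  have h1 : f x * g x - f y * g y = f x * (g x - g y) + g y * (f x - f y) := by ring
  calc |f x * g x - f y * g y| ≤ |f x * (g x - g y)| + |g y * (f x - f y)| := by
        rw [h1]; exact abs_add_le _ _
    _ = |f x| * |g x - g y| + |g y| * |f x - f y| := by rw [abs_mul, abs_mul]
    _ ≤ Cf * (Kg * |x - y|) + Cg * (Kf * |x - y|) := by
        gcongr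
        · exact hCf x
        · exact hCg y
    _ = (Cf * Kg + Cg * Kf) * |x - y| := by ring
    _ ≤ (Real.toNNReal (Cf * Kg + Cg * Kf) : ℝ) * |x - y| := by
        gcongr
        rw [Real.coe_toNNReal']
        exact le_max_left _ _

private lemma key_algebra (h p w V : ℝ) (hh : h ≠ 0) (z z' z'' : ℂ) :
    h ^ 2 * ‖(↑(w * (p / h)) : ℂ) * z + (↑w : ℂ) * z'‖ ^ 2
      + (V - p ^ 2) * (w ^ 2) * ‖z‖ ^ 2
      - ((↑(w ^ 2) : ℂ) * ((-(h : ℂ) ^ 2 * z'' + (V : ℂ) * z) * (starRingEnd ℂ) z)).re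
    = h ^ 2 * ((w ^ 2 * (2 * p / h)) * ((starRingEnd ℂ) z * z').re
        + w ^ 2 * (‖z'‖ ^ 2 + ((starRingEnd ℂ) z * z'').re)) := by
  obtain ⟨a, b⟩ := z
  obtain ⟨c, d⟩ := z'
  obtain ⟨e, f⟩ := z''
  simp only [Complex.sq_norm, Complex.normSq_apply, Complex.mul_re,
    Complex.mul_im, Complex.add_re, Complex.add_im, Complex.ofReal_re, Complex.ofReal_im,
    Complex.neg_re, Complex.neg_im, Complex.conj_re, Complex.conj_im, ← Complex.ofReal_pow]
  field_simp
  ring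

private lemma agmon_aux
    (h : ℝ) (hh : 0 < h)
    (V : ℝ → ℝ) (hV : Continuous V)
    (K : NNReal) (Φ : ℝ → ℝ) (hΦ : LipschitzWith K Φ)
    (M : ℝ) (hM : ∀ x, Φ x ≤ M)
    (u : ℝ → ℂ) (hu : ContDiff ℝ 2 u) (hsupp : HasCompactSupport u) :
    h ^ 2 * (∫ x : ℝ, ‖deriv (fun y => (Real.exp (Φ y / h) : ℂ) * u y) x‖ ^ 2)
    + (∫ x : ℝ, (V x - (deriv Φ x) ^ 2) * Real.exp (2 * Φ x / h) * ‖u x‖ ^ 2)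
    = (∫ x : ℝ, (Real.exp (2 * Φ x / h) : ℂ) *
        ((-(h : ℂ) ^ 2 * deriv (deriv u) x + (V x : ℂ) * u x) *
          (starRingEnd ℂ) (u x))).re := by
  have hne : h ≠ 0 := ne_of_gt hh
  -- regularity of u
  have hud : Differentiable ℝ u := hu.differentiable (by norm_num)
  have hu1 : ContDiff ℝ 1 (deriv u) := by
    have := (contDiff_succ_iff_deriv (n := 1)).mp (by exact_mod_cast hu)
    exact this.2.2
  have hu'd : Differentiable ℝ (deriv u) := hu1.differentiable one_ne_zero
  have hu'c : Continuous (deriv u) := hu'd.continuous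
  have hu''c : Continuous (deriv (deriv u)) := hu1.continuous_deriv le_rfl
  have hsupp' : HasCompactSupport (deriv u) := hsupp.deriv
  obtain ⟨Cu, hCu⟩ := hsupp.exists_bound_of_continuous hu.continuous
  obtain ⟨Cu', hCu'⟩ := hsupp'.exists_bound_of_continuous hu'c
  obtain ⟨CV, hCV⟩ := hsupp.isCompact.exists_bound_of_continuousOn hV.continuousOn
  have hCu0 : 0 ≤ Cu := (norm_nonneg _).trans (hCu 0)
  have hCu'0 : 0 ≤ Cu' := (norm_nonneg _).trans (hCu' 0)
  -- derivative of g = Re (conj u * u')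
  have hgd : ∀ x, HasDerivAt (fun y => ((starRingEnd ℂ) (u y) * deriv u y).re)
      (‖deriv u x‖ ^ 2 + ((starRingEnd ℂ) (u x) * deriv (deriv u) x).re) x := by
    intro x
    have h1 : HasDerivAt (fun y => (starRingEnd ℂ) (u y) * deriv u y)
        ((starRingEnd ℂ) (deriv u x) * deriv u x + (starRingEnd ℂ) (u x) * deriv (deriv u) x)
        x := by
      simp only [starRingEnd_apply]
      exact (hud x).hasDerivAt.star.mul (hu'd x).hasDerivAt
    have h2 := Complex.reCLM.hasFDerivAt.comp_hasDerivAt x h1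
    convert h2 using 1
    rotate_left 3
    simp only [Complex.reCLM_apply, Complex.add_re]
    congr 1
    rw [mul_comm, Complex.mul_conj]
    simp [Complex.normSq_eq_norm_sq, ← Complex.ofReal_pow]
    all_goals rfl
  -- derivative of f = exp(Φ/h) u at points of differentiability of Φ
  have hfd : ∀ x, DifferentiableAt ℝ Φ x →
      HasDerivAt (fun y => (Real.exp (Φ y / h) : ℂ) * u y)
        ((Real.exp (Φ x / h) * (deriv Φ x / h) : ℝ) * u x
          + (Real.exp (Φ x / h) : ℝ) * deriv u x) x := by
    intro x hx
    exact ((hx.hasDerivAt.div_const h).exp).ofReal_comp.mul (hud x).hasDerivAt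
  -- vanishing of deriv f off the support of u
  have hf0 : ∀ x, x ∉ tsupport u →
      deriv (fun y => (Real.exp (Φ y / h) : ℂ) * u y) x = 0 := by
    intro x hx
    have hev : (fun y => (Real.exp (Φ y / h) : ℂ) * u y) =ᶠ[𝓝 x] (fun _ => 0) := by
      filter_upwards [notMem_tsupport_iff_eventuallyEq.mp hx] with y hy
      simp [hy]
    rw [hev.deriv_eq]
    simp
  -- bound for E
  have hEb : ∀ x, Real.exp (2 * Φ x / h) ≤ Real.exp (2 * M / h) := by
    intro x
    apply Real.exp_le_exp.2
    have := hM x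
    gcongr
  have hwb : ∀ x, Real.exp (Φ x / h) ≤ Real.exp (M / h) := by
    intro x
    apply Real.exp_le_exp.2
    have := hM x
    gcongr
  -- indicator integrability
  have hTm : MeasurableSet (tsupport u) := (isClosed_tsupport u).measurableSet
  have hind : ∀ C : ℝ, Integrable ((tsupport u).indicator fun _ => C) := fun C =>
    (integrable_indicator_iff hTm).2 (integrableOn_const hsupp.isCompact.measure_lt_top.ne)
  -- integrability of the first integrand
  have hfAi : Integrable (fun x => ‖deriv (fun y => (Real.exp (Φ y / h) : ℂ) * u y) x‖ ^ 2) := by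
    set B1 : ℝ := (Real.exp (M / h) * ((K / h) * Cu + Cu')) ^ 2 with hB1
    refine (hind B1).mono'
      (((measurable_deriv _).norm.pow_const 2).aestronglyMeasurable) ?_
    filter_upwards [hΦ.ae_differentiableAt (μ := volume)] with x hx
    by_cases hxT : x ∈ tsupport u
    · rw [Set.indicator_of_mem hxT]
      rw [(hfd x hx).deriv]
      rw [Real.norm_eq_abs, abs_of_nonneg (by positivity)]
      have hb : ‖(Real.exp (Φ x / h) * (deriv Φ x / h) : ℝ) * u x
          + (Real.exp (Φ x / h) : ℝ) * deriv u x‖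
          ≤ Real.exp (M / h) * ((K / h) * Cu + Cu') := by
        calc ‖((Real.exp (Φ x / h) * (deriv Φ x / h) : ℝ) : ℂ) * u x
            + ((Real.exp (Φ x / h) : ℝ) : ℂ) * deriv u x‖
            ≤ ‖((Real.exp (Φ x / h) * (deriv Φ x / h) : ℝ) : ℂ) * u x‖
              + ‖((Real.exp (Φ x / h) : ℝ) : ℂ) * deriv u x‖ := norm_add_le _ _
          _ = |Real.exp (Φ x / h) * (deriv Φ x / h)| * ‖u x‖
              + |Real.exp (Φ x / h)| * ‖deriv u x‖ := by
              rw [norm_mul, norm_mul, Complex.norm_real, Complex.norm_real,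
                Real.norm_eq_abs, Real.norm_eq_abs]
          _ ≤ Real.exp (M / h) * (K / h) * Cu + Real.exp (M / h) * Cu' := by
              gcongr
              · rw [abs_mul, abs_div, abs_of_pos (Real.exp_pos _), abs_of_pos hh]
                have h1 : |deriv Φ x| ≤ (K : ℝ) := lipschitz_deriv_bound hΦ x
                have h2 := hwb x
                have h3 : (0:ℝ) < h := hh
                gcongr
              · exact hCu x
              · rw [abs_of_pos (Real.exp_pos _)]
                exact hwb x
              · exact hCu' x
          _ = Real.exp (M / h) * ((K / h) * Cu + Cu') := by ring
      calc ‖_‖ ^ 2 ≤ (Real.exp (M / h) * ((K / h) * Cu + Cu')) ^ 2 := by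
            apply pow_le_pow_left₀ (norm_nonneg _) hb
        _ = B1 := rfl
    · rw [Set.indicator_of_notMem hxT, hf0 x hxT]
      simp
  -- integrability of the second integrand
  have hfBi : Integrable
      (fun x => (V x - (deriv Φ x) ^ 2) * Real.exp (2 * Φ x / h) * ‖u x‖ ^ 2) := by
    set B2 : ℝ := (CV + (K : ℝ) ^ 2) * Real.exp (2 * M / h) * Cu ^ 2 with hB2
    have hmeas : AEStronglyMeasurable
        (fun x => (V x - (deriv Φ x) ^ 2) * Real.exp (2 * Φ x / h) * ‖u x‖ ^ 2) volume := by
      apply Measurable.aestronglyMeasurable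
      exact ((hV.measurable.sub ((measurable_deriv Φ).pow_const 2)).mul
        ((Real.continuous_exp.comp ((continuous_const.mul hΦ.continuous).div_const h)).measurable)).mul
        ((hu.continuous.norm.measurable).pow_const 2)
    refine (hind B2).mono' hmeas ?_
    refine Filter.Eventually.of_forall fun x => ?_
    by_cases hxT : x ∈ tsupport u
    · rw [Set.indicator_of_mem hxT, Real.norm_eq_abs]
      have h1 : |V x - (deriv Φ x) ^ 2| ≤ CV + (K : ℝ) ^ 2 := by
        refine (abs_sub _ _).trans ?_
        gcongr
        · exact hCV x hxT
        · rw [abs_pow]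
          exact pow_le_pow_left₀ (abs_nonneg _) (lipschitz_deriv_bound hΦ x) 2
      have h2 : |Real.exp (2 * Φ x / h)| = Real.exp (2 * Φ x / h) :=
        abs_of_pos (Real.exp_pos _)
      have h3 : |‖u x‖ ^ 2| = ‖u x‖ ^ 2 := abs_of_nonneg (by positivity)
      rw [abs_mul, abs_mul, h2, h3]
      have h4 : ‖u x‖ ^ 2 ≤ Cu ^ 2 := pow_le_pow_left₀ (norm_nonneg _) (hCu x) 2
      have h5 : |V x - deriv Φ x ^ 2| * Real.exp (2 * Φ x / h)
          ≤ (CV + (K : ℝ) ^ 2) * Real.exp (2 * M / h) :=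
        mul_le_mul h1 (hEb x) (Real.exp_pos _).le ((abs_nonneg _).trans h1)
      calc |V x - deriv Φ x ^ 2| * Real.exp (2 * Φ x / h) * ‖u x‖ ^ 2
          ≤ (CV + (K : ℝ) ^ 2) * Real.exp (2 * M / h) * Cu ^ 2 :=
            mul_le_mul h5 h4 (by positivity) (le_trans (by positivity) h5)
        _ = B2 := rfl
    · rw [Set.indicator_of_notMem hxT, image_eq_zero_of_notMem_tsupport hxT]
      simp
  -- integrability of the third integrand
  have hfCcont : Continuous (fun x => (Real.exp (2 * Φ x / h) : ℂ) *
      ((-(h : ℂ) ^ 2 * deriv (deriv u) x + (V x : ℂ) * u x) * (starRingEnd ℂ) (u x))) := by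
    refine (Complex.continuous_ofReal.comp
      (Real.continuous_exp.comp ((continuous_const.mul hΦ.continuous).div_const h))).mul ?_
    refine (((continuous_const.mul hu''c).add
      ((Complex.continuous_ofReal.comp hV).mul hu.continuous)).mul ?_)
    exact continuous_star.comp hu.continuous
  have hfCc : HasCompactSupport (fun x => (Real.exp (2 * Φ x / h) : ℂ) *
      ((-(h : ℂ) ^ 2 * deriv (deriv u) x + (V x : ℂ) * u x) * (starRingEnd ℂ) (u x))) := by
    have h1 : HasCompactSupport (fun x => (starRingEnd ℂ) (u x)) :=
      hsupp.comp_left (by simp)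
    exact (h1.mul_left).mul_left
  have hfCi : Integrable (fun x => (Real.exp (2 * Φ x / h) : ℂ) *
      ((-(h : ℂ) ^ 2 * deriv (deriv u) x + (V x : ℂ) * u x) * (starRingEnd ℂ) (u x))) :=
    hfCcont.integrable_of_hasCompactSupport hfCc
  -- g: compact support, bounds, Lipschitz
  have hgcont : Continuous (fun x => ((starRingEnd ℂ) (u x) * deriv u x).re) :=
    Complex.continuous_re.comp ((continuous_star.comp hu.continuous).mul hu'c)
  have hgc : HasCompactSupport (fun x => ((starRingEnd ℂ) (u x) * deriv u x).re) := by
    have h1 : HasCompactSupport (fun x => (starRingEnd ℂ) (u x) * deriv u x) :=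
      HasCompactSupport.mul_left hsupp'
    exact h1.comp_left (by simp)
  obtain ⟨Cg, hCg⟩ := hgc.exists_bound_of_continuous hgcont
  have hgderiv_eq : (deriv fun x => ((starRingEnd ℂ) (u x) * deriv u x).re)
      = fun x => ‖deriv u x‖ ^ 2 + ((starRingEnd ℂ) (u x) * deriv (deriv u) x).re :=
    funext fun x => (hgd x).deriv
  have hgderivcont : Continuous
      (fun x => ‖deriv u x‖ ^ 2 + ((starRingEnd ℂ) (u x) * deriv (deriv u) x).re) :=
    ((hu'c.norm.pow 2)).add
      (Complex.continuous_re.comp ((continuous_star.comp hu.continuous).mul hu''c))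
  have hgderivc : HasCompactSupport
      (fun x => ‖deriv u x‖ ^ 2 + ((starRingEnd ℂ) (u x) * deriv (deriv u) x).re) := by
    rw [← hgderiv_eq]; exact hgc.deriv
  obtain ⟨Cg', hCg'⟩ := hgderivc.exists_bound_of_continuous hgderivcont
  have hglip : LipschitzWith (Real.toNNReal Cg')
      (fun x => ((starRingEnd ℂ) (u x) * deriv u x).re) := by
    apply lipschitzWith_of_nnnorm_deriv_le (fun x => (hgd x).differentiableAt)
    intro x
    rw [← NNReal.coe_le_coe, coe_nnnorm, Real.coe_toNNReal']
    rw [hgderiv_eq]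
    exact (hCg' x).trans (le_max_left _ _)
  -- E is Lipschitz
  have hψlip : LipschitzWith (Real.toNNReal (2 / h) * K) (fun x => 2 * Φ x / h) := by
    apply LipschitzWith.of_dist_le_mul
    intro x y
    rw [Real.dist_eq, Real.dist_eq]
    have h1 : |2 * Φ x / h - 2 * Φ y / h| = (2 / h) * |Φ x - Φ y| := by
      rw [← abs_of_pos (show (0:ℝ) < 2 / h by positivity), ← abs_mul]
      congr 1
      field_simp
    rw [h1]
    have h2 : |Φ x - Φ y| ≤ K * |x - y| := by
      have := hΦ.dist_le_mul x y
      rwa [Real.dist_eq, Real.dist_eq] at this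
    calc (2 / h) * |Φ x - Φ y| ≤ (2 / h) * ((K : ℝ) * |x - y|) := by gcongr
      _ = ((Real.toNNReal (2 / h) * K : NNReal) : ℝ) * |x - y| := by
          push_cast
          rw [Real.coe_toNNReal _ (by positivity)]
          ring
  have hElip : LipschitzWith (Real.toNNReal (Real.exp (2 * M / h)) * (Real.toNNReal (2 / h) * K))
      (fun x => Real.exp (2 * Φ x / h)) := by
    apply LipschitzWith.of_dist_le_mul
    intro x y
    rw [Real.dist_eq, Real.dist_eq]
    have hax : 2 * Φ x / h ≤ 2 * M / h := by
      have := hM x; gcongr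
    have hay : 2 * Φ y / h ≤ 2 * M / h := by
      have := hM y; gcongr
    calc |Real.exp (2 * Φ x / h) - Real.exp (2 * Φ y / h)|
        ≤ Real.exp (2 * M / h) * |2 * Φ x / h - 2 * Φ y / h| := exp_sub_exp_abs_le hax hay
      _ ≤ Real.exp (2 * M / h) * (((Real.toNNReal (2 / h) * K : NNReal) : ℝ) * |x - y|) := by
          gcongr
          have := hψlip.dist_le_mul x y
          rwa [Real.dist_eq, Real.dist_eq] at this
      _ = ((Real.toNNReal (Real.exp (2 * M / h)) * (Real.toNNReal (2 / h) * K) : NNReal) : ℝ)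
            * |x - y| := by
          push_cast
          rw [Real.coe_toNNReal _ (Real.exp_pos _).le]
          ring
  have hEabs : ∀ x, |Real.exp (2 * Φ x / h)| ≤ Real.exp (2 * M / h) := fun x => by
    rw [abs_of_pos (Real.exp_pos _)]; exact hEb x
  have hCgabs : ∀ x, |((starRingEnd ℂ) (u x) * deriv u x).re| ≤ Cg := fun x => by
    have := hCg x; rwa [Real.norm_eq_abs] at this
  have hFlip := lipschitzWith_mul_of_bounded hElip hglip hEabs hCgabs
  have hFc : HasCompactSupport
      (fun x => Real.exp (2 * Φ x / h) * ((starRingEnd ℂ) (u x) * deriv u x).re) :=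
    HasCompactSupport.mul_left hgc
  have hFTC : ∫ x : ℝ, deriv
      (fun y => Real.exp (2 * Φ y / h) * ((starRingEnd ℂ) (u y) * deriv u y).re) x = 0 :=
    integral_deriv_eq_zero_of_lipschitz hFlip hFc
  -- the pointwise a.e. identity
  have key_ae : (fun x => h ^ 2 * ‖deriv (fun y => (Real.exp (Φ y / h) : ℂ) * u y) x‖ ^ 2
        + (V x - (deriv Φ x) ^ 2) * Real.exp (2 * Φ x / h) * ‖u x‖ ^ 2
        - ((Real.exp (2 * Φ x / h) : ℂ) * ((-(h : ℂ) ^ 2 * deriv (deriv u) x + (V x : ℂ) * u x)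
            * (starRingEnd ℂ) (u x))).re)
      =ᵐ[volume] (fun x => h ^ 2 *
          deriv (fun y => Real.exp (2 * Φ y / h) * ((starRingEnd ℂ) (u y) * deriv u y).re) x) := by
    filter_upwards [hΦ.ae_differentiableAt (μ := volume)] with x hx
    have hEd : HasDerivAt (fun y => Real.exp (2 * Φ y / h))
        (Real.exp (2 * Φ x / h) * (2 * deriv Φ x / h)) x := by
      have h1 : HasDerivAt (fun y => 2 * Φ y / h) (2 * deriv Φ x / h) x :=
        (hx.hasDerivAt.const_mul 2).div_const h
      exact h1.exp
    have hFd : HasDerivAt (fun y => Real.exp (2 * Φ y / h) * ((starRingEnd ℂ) (u y) * deriv u y).re) _ x :=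
      hEd.mul (hgd x)
    rw [(hfd x hx).deriv, hFd.deriv]
    have hEsq : Real.exp (2 * Φ x / h) = (Real.exp (Φ x / h)) ^ 2 := by
      rw [sq, ← Real.exp_add]
      congr 1
      ring
    rw [hEsq]
    exact key_algebra h (deriv Φ x) (Real.exp (Φ x / h)) (V x) hne (u x) (deriv u x)
      (deriv (deriv u) x)
  -- bookkeeping
  have hfCrei : Integrable (fun x => ((Real.exp (2 * Φ x / h) : ℂ) *
      ((-(h : ℂ) ^ 2 * deriv (deriv u) x + (V x : ℂ) * u x) * (starRingEnd ℂ) (u x))).re) := by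
    have := hfCi.re
    simpa [RCLike.re_to_complex] using this
  have e1 := integral_re hfCi
  simp only [RCLike.re_to_complex] at e1
  have big : ∫ x : ℝ, (h ^ 2 * ‖deriv (fun y => (Real.exp (Φ y / h) : ℂ) * u y) x‖ ^ 2
        + (V x - (deriv Φ x) ^ 2) * Real.exp (2 * Φ x / h) * ‖u x‖ ^ 2
        - ((Real.exp (2 * Φ x / h) : ℂ) * ((-(h : ℂ) ^ 2 * deriv (deriv u) x + (V x : ℂ) * u x)
            * (starRingEnd ℂ) (u x))).re) = 0 := by
    rw [integral_congr_ae key_ae, integral_const_mul, hFTC, mul_zero]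
  have split : ∫ x : ℝ, (h ^ 2 * ‖deriv (fun y => (Real.exp (Φ y / h) : ℂ) * u y) x‖ ^ 2
        + (V x - (deriv Φ x) ^ 2) * Real.exp (2 * Φ x / h) * ‖u x‖ ^ 2
        - ((Real.exp (2 * Φ x / h) : ℂ) * ((-(h : ℂ) ^ 2 * deriv (deriv u) x + (V x : ℂ) * u x)
            * (starRingEnd ℂ) (u x))).re)
      = h ^ 2 * (∫ x : ℝ, ‖deriv (fun y => (Real.exp (Φ y / h) : ℂ) * u y) x‖ ^ 2)
        + (∫ x : ℝ, (V x - (deriv Φ x) ^ 2) * Real.exp (2 * Φ x / h) * ‖u x‖ ^ 2)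
        - ∫ x : ℝ, ((Real.exp (2 * Φ x / h) : ℂ) *
            ((-(h : ℂ) ^ 2 * deriv (deriv u) x + (V x : ℂ) * u x) * (starRingEnd ℂ) (u x))).re := by
    have hA2 : Integrable (fun x => h ^ 2 *
        ‖deriv (fun y => (Real.exp (Φ y / h) : ℂ) * u y) x‖ ^ 2) := hfAi.const_mul _
    have hsum : Integrable (fun x => h ^ 2 *
        ‖deriv (fun y => (Real.exp (Φ y / h) : ℂ) * u y) x‖ ^ 2
        + (V x - (deriv Φ x) ^ 2) * Real.exp (2 * Φ x / h) * ‖u x‖ ^ 2) := hA2.add hfBi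
    rw [integral_sub hsum hfCrei, integral_add hA2 hfBi, integral_const_mul]
  rw [split, e1] at big
  linarith

/-- The Lithner–Agmon energy identity for a compactly supported `C²` function:
`h² ∫ |(e^{Φ/h}u)'|² + ∫ (V - Φ'²) e^{2Φ/h} |u|² = Re ∫ e^{2Φ/h} (Pu) ū`,
where `P = -h²∂ₓ² + V` and `Φ` is Lipschitz (so that `deriv Φ` exists a.e.). -/
theorem lithner_agmon_identity_compact_support
    (h : ℝ) (hh : 0 < h)
    (V : ℝ → ℝ) (hV : Continuous V)
    (Φ : ℝ → ℝ) (hΦ : ∃ K : NNReal, LipschitzWith K Φ)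
    (u : ℝ → ℂ) (hu : ContDiff ℝ 2 u) (hsupp : HasCompactSupport u) :
    h ^ 2 * (∫ x : ℝ, ‖deriv (fun y => (Real.exp (Φ y / h) : ℂ) * u y) x‖ ^ 2)
    + (∫ x : ℝ, (V x - (deriv Φ x) ^ 2) * Real.exp (2 * Φ x / h) * ‖u x‖ ^ 2)
    = (∫ x : ℝ, (Real.exp (2 * Φ x / h) : ℂ) *
        ((-(h : ℂ) ^ 2 * deriv (deriv u) x + (V x : ℂ) * u x) *
          (starRingEnd ℂ) (u x))).re := by
  obtain ⟨K, hK⟩ := hΦ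
  obtain ⟨R, hR⟩ := hsupp.isCompact.isBounded.subset_ball 0
  set M : ℝ := |Φ 0| + (K : ℝ) * (R + 1) with hM_def
  set Ψ : ℝ → ℝ := fun x => min (Φ x) M with hΨ_def
  have hΨlip : LipschitzWith K Ψ := hK.min_const M
  have hΨle : ∀ x, Ψ x ≤ M := fun x => min_le_right _ _
  have hball : tsupport u ⊆ Metric.ball 0 (R + 1) := by
    refine hR.trans (Metric.ball_subset_ball ?_)
    linarith
  have hΦM : ∀ x ∈ Metric.ball (0:ℝ) (R + 1), Φ x ≤ M := by
    intro x hx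
    have h1 : |Φ x - Φ 0| ≤ (K : ℝ) * |x - 0| := by
      have := hK.dist_le_mul x 0
      rwa [Real.dist_eq, Real.dist_eq] at this
    have h2 : |x| < R + 1 := by
      have := Metric.mem_ball.mp hx
      rwa [Real.dist_eq, sub_zero] at this
    rw [sub_zero] at h1
    have h5 : (K : ℝ) * |x| ≤ (K : ℝ) * (R + 1) :=
      mul_le_mul_of_nonneg_left h2.le K.coe_nonneg
    have h6 := le_abs_self (Φ x - Φ 0)
    have h7 := le_abs_self (Φ 0)
    rw [hM_def]
    linarith
  have hΨΦ : ∀ x ∈ Metric.ball (0:ℝ) (R + 1), Ψ x = Φ x := fun x hx =>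
    min_eq_left (hΦM x hx)
  have hev : ∀ x ∈ Metric.ball (0:ℝ) (R + 1), Φ =ᶠ[𝓝 x] Ψ := fun x hx =>
    Filter.eventuallyEq_of_mem (Metric.isOpen_ball.mem_nhds hx) (fun y hy => (hΨΦ y hy).symm)
  have e1 : ∀ x, deriv (fun y => (Real.exp (Φ y / h) : ℂ) * u y) x
      = deriv (fun y => (Real.exp (Ψ y / h) : ℂ) * u y) x := by
    intro x
    by_cases hx : x ∈ tsupport u
    · apply Filter.EventuallyEq.deriv_eq
      filter_upwards [hev x (hball hx)] with y hy
      rw [hy]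
    · have hu0 := notMem_tsupport_iff_eventuallyEq.mp hx
      have ha : (fun y => (Real.exp (Φ y / h) : ℂ) * u y) =ᶠ[𝓝 x] (fun _ => 0) := by
        filter_upwards [hu0] with y hy; simp [hy]
      have hb : (fun y => (Real.exp (Ψ y / h) : ℂ) * u y) =ᶠ[𝓝 x] (fun _ => 0) := by
        filter_upwards [hu0] with y hy; simp [hy]
      rw [ha.deriv_eq, hb.deriv_eq]
  have e2 : ∀ x, (V x - (deriv Φ x) ^ 2) * Real.exp (2 * Φ x / h) * ‖u x‖ ^ 2
      = (V x - (deriv Ψ x) ^ 2) * Real.exp (2 * Ψ x / h) * ‖u x‖ ^ 2 := by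
    intro x
    by_cases hx : x ∈ tsupport u
    · have hb := hball hx
      rw [(hev x hb).deriv_eq, hΨΦ x hb]
    · simp [image_eq_zero_of_notMem_tsupport hx]
  have e3 : ∀ x, (Real.exp (2 * Φ x / h) : ℂ) *
        ((-(h : ℂ) ^ 2 * deriv (deriv u) x + (V x : ℂ) * u x) * (starRingEnd ℂ) (u x))
      = (Real.exp (2 * Ψ x / h) : ℂ) *
        ((-(h : ℂ) ^ 2 * deriv (deriv u) x + (V x : ℂ) * u x) * (starRingEnd ℂ) (u x)) := by
    intro x
    by_cases hx : x ∈ tsupport u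
    · rw [hΨΦ x (hball hx)]
    · simp [image_eq_zero_of_notMem_tsupport hx]
  have E1 : (∫ x : ℝ, ‖deriv (fun y => (Real.exp (Φ y / h) : ℂ) * u y) x‖ ^ 2)
      = ∫ x : ℝ, ‖deriv (fun y => (Real.exp (Ψ y / h) : ℂ) * u y) x‖ ^ 2 := by
    congr 1; funext x; rw [e1 x]
  have E2 : (∫ x : ℝ, (V x - (deriv Φ x) ^ 2) * Real.exp (2 * Φ x / h) * ‖u x‖ ^ 2)
      = ∫ x : ℝ, (V x - (deriv Ψ x) ^ 2) * Real.exp (2 * Ψ x / h) * ‖u x‖ ^ 2 := by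
    congr 1; funext x; rw [e2 x]
  have E3 : (∫ x : ℝ, (Real.exp (2 * Φ x / h) : ℂ) *
        ((-(h : ℂ) ^ 2 * deriv (deriv u) x + (V x : ℂ) * u x) * (starRingEnd ℂ) (u x)))
      = ∫ x : ℝ, (Real.exp (2 * Ψ x / h) : ℂ) *
        ((-(h : ℂ) ^ 2 * deriv (deriv u) x + (V x : ℂ) * u x) * (starRingEnd ℂ) (u x)) := by
    congr 1; funext x; rw [e3 x]
  rw [E1, E2, E3]
  exact agmon_aux h hh V hV K Ψ hΨlip M hΨle u hu hsupp
end

section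
/- Let h > 0, let V : ℝ → ℝ be continuous and bounded, let Φ : ℝ → ℝ be Lipschitz and constant outside some compact set, and let u : ℝ → ℂ be twice continuously differentiable with u ∈ L²(ℝ) and u'' ∈ L²(ℝ). Then h² ∫_ℝ |(e^{Φ/h} u)'(x)|² dx + ∫_ℝ ( V(x) − Φ'(x)² ) e^{2Φ(x)/h} |u(x)|² dx = Re ∫_ℝ e^{2Φ(x)/h} ( −h² u''(x) + V(x) u(x) ) · conj(u(x)) dx, where Φ' denotes the almost-everywhere derivative of Φ. -/
open MeasureTheory Set Filter intervalIntegral Topology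

lemma aux_exp_sub_le' {m s t : ℝ} (hs : s ≤ m) (hts : t ≤ s) :
    Real.exp s - Real.exp t ≤ Real.exp m * (s - t) := by
  have h1 : 1 - (s - t) ≤ Real.exp (-(s - t)) := by
    have := Real.add_one_le_exp (-(s - t)); linarith
  have h2 : Real.exp t = Real.exp s * Real.exp (-(s - t)) := by
    rw [← Real.exp_add]; ring_nf
  have h3 : Real.exp s * (1 - (s - t)) ≤ Real.exp t := by
    rw [h2]; exact mul_le_mul_of_nonneg_left h1 (Real.exp_pos s).le
  have h4 : Real.exp s ≤ Real.exp m := Real.exp_le_exp.2 hs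
  nlinarith [Real.exp_pos s]

lemma aux_exp_sub_le {m s t : ℝ} (hs : s ≤ m) (ht : t ≤ m) :
    |Real.exp s - Real.exp t| ≤ Real.exp m * |s - t| := by
  rcases le_total t s with hts | hst
  · rw [abs_of_nonneg (by linarith [Real.exp_le_exp.2 hts] : (0:ℝ) ≤ Real.exp s - Real.exp t),
      abs_of_nonneg (by linarith : (0:ℝ) ≤ s - t)]
    exact aux_exp_sub_le' hs hts
  · rw [abs_sub_comm, abs_sub_comm s t,
      abs_of_nonneg (by linarith [Real.exp_le_exp.2 hst] : (0:ℝ) ≤ Real.exp t - Real.exp s),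
      abs_of_nonneg (by linarith : (0:ℝ) ≤ t - s)]
    exact aux_exp_sub_le' ht hst

/-- An integrable function cannot be bounded below by a positive constant on a right ray. -/
lemma aux_not_int_Ioi {g : ℝ → ℝ} (hg : Integrable g) {c M : ℝ} (hc : 0 < c)
    (hge : ∀ x, M ≤ x → c ≤ |g x|) : False := by
  have hconst : IntegrableOn (fun _ : ℝ => c) (Ioi M) := by
    refine Integrable.mono' (hg.abs.integrableOn) aestronglyMeasurable_const ?_
    refine (ae_restrict_iff' measurableSet_Ioi).2 (Eventually.of_forall fun x hx => ?_)
    rw [Real.norm_eq_abs, abs_of_pos hc]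
    exact hge x hx.le
  rw [integrableOn_const_iff] at hconst
  rcases hconst with h | h
  · exact hc.ne' (by simpa using h)
  · rw [Real.volume_Ioi] at h; exact (lt_irrefl _ h).elim

lemma aux_not_int_Iio {g : ℝ → ℝ} (hg : Integrable g) {c M : ℝ} (hc : 0 < c)
    (hge : ∀ x, x ≤ M → c ≤ |g x|) : False := by
  have hconst : IntegrableOn (fun _ : ℝ => c) (Iio M) := by
    refine Integrable.mono' (hg.abs.integrableOn) aestronglyMeasurable_const ?_
    refine (ae_restrict_iff' measurableSet_Iio).2 (Eventually.of_forall fun x hx => ?_)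
    rw [Real.norm_eq_abs, abs_of_pos hc]
    exact hge x hx.le
  rw [integrableOn_const_iff] at hconst
  rcases hconst with h | h
  · exact hc.ne' (by simpa using h)
  · rw [Real.volume_Iio] at h; exact (lt_irrefl _ h).elim

/-- An integrable function converging at `atTop` converges to 0. -/
lemma aux_tendsto_zero_atTop {g : ℝ → ℝ} (hg : Integrable g) {L : ℝ}
    (hL : Tendsto g atTop (𝓝 L)) : L = 0 := by
  by_contra hne
  have hpos : 0 < |L| / 2 := by positivity
  have hev : ∀ᶠ x in atTop, |g x - L| < |L| / 2 :=
    hL.eventually (eventually_iff_exists_mem.2 ⟨Metric.ball L (|L|/2),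
      Metric.ball_mem_nhds _ hpos, fun y hy => by simpa [Real.dist_eq] using hy⟩)
  obtain ⟨M, hM⟩ := (eventually_atTop.1 hev)
  refine aux_not_int_Ioi hg hpos (M := M) fun x hx => ?_
  have := hM x hx
  have h1 : |L| - |g x| ≤ |g x - L| := by
    have := abs_sub_abs_le_abs_sub L (g x)
    rw [abs_sub_comm] at this; linarith
  linarith

lemma aux_tendsto_zero_atBot {g : ℝ → ℝ} (hg : Integrable g) {L : ℝ}
    (hL : Tendsto g atBot (𝓝 L)) : L = 0 := by
  by_contra hne
  have hpos : 0 < |L| / 2 := by positivity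
  have hev : ∀ᶠ x in atBot, |g x - L| < |L| / 2 :=
    hL.eventually (eventually_iff_exists_mem.2 ⟨Metric.ball L (|L|/2),
      Metric.ball_mem_nhds _ hpos, fun y hy => by simpa [Real.dist_eq] using hy⟩)
  obtain ⟨M, hM⟩ := (eventually_atBot.1 hev)
  refine aux_not_int_Iio hg hpos (M := M) fun x hx => ?_
  have := hM x hx
  have h1 : |L| - |g x| ≤ |g x - L| := by
    have := abs_sub_abs_le_abs_sub L (g x)
    rw [abs_sub_comm] at this; linarith
  linarith

/-- FTC for a function Lipschitz on `[a, b+1]` and a.e. differentiable. -/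
lemma ftc_lipschitzOn {F : ℝ → ℝ} {L : ℝ} {a b : ℝ} (hab : a ≤ b) (hL : 0 ≤ L)
    (hlip : ∀ x ∈ Icc a (b+1), ∀ y ∈ Icc a (b+1), |F x - F y| ≤ L * |x - y|)
    (hdiff : ∀ᵐ x, DifferentiableAt ℝ F x) :
    ∫ x in a..b, deriv F x = F b - F a := by
  set t : ℕ → ℝ := fun n => 1 / (n + 1) with ht_def
  have ht_pos : ∀ n, 0 < t n := fun n => by positivity
  have ht_le : ∀ n, t n ≤ 1 := fun n => by
    rw [ht_def, div_le_one (by positivity)]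
    linarith [Nat.cast_nonneg (α := ℝ) n]
  have ht0 : Tendsto t atTop (𝓝 0) := tendsto_one_div_add_atTop_nhds_zero_nat
  -- continuity of F on the interval
  have hcont : ContinuousOn F (Icc a (b + 1)) := by
    intro x hx
    refine Metric.continuousWithinAt_iff.2 fun ε hε => ?_
    refine ⟨ε / (L + 1), by positivity, fun y hy hd => ?_⟩
    have h1 : |F y - F x| ≤ L * |y - x| := hlip y hy x hx
    have h2 : |y - x| < ε / (L + 1) := by simpa [Real.dist_eq] using hd
    rw [Real.dist_eq]
    calc |F y - F x| ≤ L * |y - x| := h1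
      _ ≤ L * (ε / (L+1)) := mul_le_mul_of_nonneg_left h2.le hL
      _ < ε := by
          rw [mul_div_assoc', div_lt_iff₀ (by linarith : (0:ℝ) < L + 1)]
          nlinarith
  have hsub : ∀ c d : ℝ, c ∈ Icc a (b+1) → d ∈ Icc a (b+1) →
      IntervalIntegrable F volume c d := fun c d hc hd =>
    (hcont.mono (uIcc_subset_Icc hc hd)).intervalIntegrable
  -- the slope functions
  set g : ℕ → ℝ → ℝ := fun n x => (F (x + t n) - F x) / t n with hg_def
  -- membership helpers
  have hmem : ∀ n, ∀ x ∈ Icc a b, x + t n ∈ Icc a (b+1) := fun n x hx =>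
    ⟨by linarith [hx.1, (ht_pos n).le], by linarith [hx.2, ht_le n]⟩
  have hmem' : ∀ x ∈ Icc a b, x ∈ Icc a (b+1) := fun x hx => ⟨hx.1, by linarith [hx.2]⟩
  -- Step 1 : value of ∫ gₙ over a..b
  have hval : ∀ n, ∫ x in a..b, g n x =
      ((∫ x in b..(b + t n), F x) - ∫ x in a..(a + t n), F x) / t n := by
    intro n
    have hF1 : IntervalIntegrable (fun x => F (x + t n)) volume a b := by
      have : ContinuousOn (fun x => F (x + t n)) (Icc a b) := by
        refine ContinuousOn.comp hcont (Continuous.continuousOn (by continuity)) ?_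
        intro x hx; exact hmem n x hx
      exact this.intervalIntegrable_of_Icc hab
    have hF2 : IntervalIntegrable F volume a b :=
      hsub a b (hmem' a ⟨le_refl a, hab⟩) (hmem' b ⟨hab, le_refl b⟩)
    have e1 : ∫ x in a..b, g n x
        = ((∫ x in a..b, F (x + t n)) - ∫ x in a..b, F x) / t n := by
      rw [← intervalIntegral.integral_sub hF1 hF2, ← intervalIntegral.integral_div]
    rw [e1, intervalIntegral.integral_comp_add_right]
    congr 1
    have hia : IntervalIntegrable F volume a (a + t n) :=
      hsub _ _ (hmem' a ⟨le_refl a, hab⟩) (hmem n a ⟨le_refl a, hab⟩)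
    have hib : IntervalIntegrable F volume (a + t n) b :=
      hsub _ _ (hmem n a ⟨le_refl a, hab⟩) (hmem' b ⟨hab, le_refl b⟩)
    have hbb : IntervalIntegrable F volume b (b + t n) :=
      hsub _ _ (hmem' b ⟨hab, le_refl b⟩) (hmem n b ⟨hab, le_refl b⟩)
    have e2 := intervalIntegral.integral_add_adjacent_intervals hia hib
    have e3 := intervalIntegral.integral_add_adjacent_intervals hib hbb
    linarith
  -- Step 2 : limit of the averages at an endpoint
  have havg : ∀ c ∈ Icc a b, Tendsto (fun n => (∫ x in c..(c + t n), F x) / t n)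
      atTop (𝓝 (F c)) := by
    intro c hc
    have key : ∀ n, |(∫ x in c..(c + t n), F x) / t n - F c| ≤ L * t n := by
      intro n
      have hci : IntervalIntegrable F volume c (c + t n) :=
        hsub _ _ (hmem' c hc) (hmem n c hc)
      have e1 : (∫ x in c..(c + t n), F x) - t n * F c
          = ∫ x in c..(c + t n), (F x - F c) := by
        rw [intervalIntegral.integral_sub hci intervalIntegrable_const,
          intervalIntegral.integral_const, smul_eq_mul]
        ring
      have e2 : ‖∫ x in c..(c + t n), (F x - F c)‖ ≤ (L * t n) * |c + t n - c| := by
        refine intervalIntegral.norm_integral_le_of_norm_le_const fun x hx => ?_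
        rw [Set.uIoc_of_le (by linarith [(ht_pos n).le] : c ≤ c + t n)] at hx
        have hxI : x ∈ Icc a (b+1) :=
          ⟨by linarith [hc.1, hx.1.le], by linarith [hc.2, hx.2, ht_le n]⟩
        rw [Real.norm_eq_abs]
        calc |F x - F c| ≤ L * |x - c| := hlip x hxI c (hmem' c hc)
          _ ≤ L * t n := by
              refine mul_le_mul_of_nonneg_left ?_ hL
              rw [abs_le]
              exact ⟨by linarith [hx.1.le, (ht_pos n).le], by linarith [hx.2]⟩

      have e3 : |(∫ x in c..(c + t n), F x) - t n * F c| ≤ L * t n * t n := by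
        rw [e1]
        simpa [abs_of_pos (ht_pos n)] using e2
      have e4 : (∫ x in c..(c + t n), F x) / t n - F c
          = ((∫ x in c..(c + t n), F x) - t n * F c) / t n := by
        rw [sub_div, mul_div_cancel_left₀ _ (ht_pos n).ne']
      rw [e4, abs_div, abs_of_pos (ht_pos n), div_le_iff₀ (ht_pos n)]
      exact e3
    have h0 : Tendsto (fun n => L * t n) atTop (𝓝 (L * 0)) := ht0.const_mul L
    rw [mul_zero] at h0
    have := squeeze_zero_norm
      (fun n => by rw [Real.norm_eq_abs]; exact key n) h0
    have h2 : Tendsto (fun n => ((∫ x in c..(c + t n), F x) / t n - F c) + F c)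
        atTop (𝓝 (0 + F c)) := this.add tendsto_const_nhds
    simpa using h2
  -- Step 3 : dominated convergence
  have hint : ∀ n, AEStronglyMeasurable (g n) (volume.restrict (Ioc a b)) := by
    intro n
    have hgc : ContinuousOn (g n) (Icc a b) := by
      have c1 : ContinuousOn (fun x => F (x + t n)) (Icc a b) :=
        ContinuousOn.comp hcont (Continuous.continuousOn (by continuity)) (hmem n)
      have c2 : ContinuousOn F (Icc a b) := hcont.mono fun x hx => hmem' x hx
      exact (c1.sub c2).div_const _
    exact (hgc.mono Ioc_subset_Icc_self).aestronglyMeasurable measurableSet_Ioc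
  have hbound : ∀ n, ∀ᵐ x ∂(volume.restrict (Ioc a b)), ‖g n x‖ ≤ L := by
    intro n
    refine (ae_restrict_iff' measurableSet_Ioc).2 (Eventually.of_forall fun x hx => ?_)
    have hxI : x ∈ Icc a b := Ioc_subset_Icc_self hx
    have h1 : |F (x + t n) - F x| ≤ L * t n := by
      calc |F (x + t n) - F x| ≤ L * |x + t n - x| := hlip _ (hmem n x hxI) _ (hmem' x hxI)
        _ = L * t n := by rw [add_sub_cancel_left, abs_of_pos (ht_pos n)]
    have : ‖g n x‖ = |F (x + t n) - F x| / t n := by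
      rw [Real.norm_eq_abs, hg_def, abs_div, abs_of_pos (ht_pos n)]
    rw [this, div_le_iff₀ (ht_pos n)]
    exact h1
  have hlim : ∀ᵐ x ∂(volume.restrict (Ioc a b)),
      Tendsto (fun n => g n x) atTop (𝓝 (deriv F x)) := by
    refine ae_restrict_of_ae ?_
    filter_upwards [hdiff] with x hx
    have hd : HasDerivAt F (deriv F x) x := hx.hasDerivAt
    have hslope := hasDerivAt_iff_tendsto_slope.1 hd
    have htx : Tendsto (fun n => x + t n) atTop (𝓝[≠] x) := by
      refine tendsto_nhdsWithin_of_tendsto_nhds_of_eventually_within _ ?_ ?_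
      · have : Tendsto (fun n => x + t n) atTop (𝓝 (x + 0)) :=
          tendsto_const_nhds.add ht0
        simpa using this
      · exact Eventually.of_forall fun n => by
          simp [mem_compl_singleton_iff]
          exact (ht_pos n).ne'
    have hcomp := hslope.comp htx
    refine hcomp.congr fun n => ?_
    simp only [Function.comp_apply, slope_def_field, add_sub_cancel_left, hg_def]
  have hDCT := MeasureTheory.tendsto_integral_of_dominated_convergence
      (μ := volume.restrict (Ioc a b)) (f := deriv F) (fun _ => L) hint
      (integrableOn_const (μ := volume) (s := Ioc a b) (by
        rw [Real.volume_Ioc]; exact ENNReal.ofReal_ne_top)) hbound hlim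
  have h2 : Tendsto (fun n => ∫ x in a..b, g n x) atTop
      (𝓝 (∫ x in Ioc a b, deriv F x)) := by
    refine Tendsto.congr (fun n => ?_) hDCT
    rw [intervalIntegral.integral_of_le hab]
  have h3 : Tendsto (fun n => ∫ x in a..b, g n x) atTop (𝓝 (F b - F a)) := by
    have hh := (havg b ⟨hab, le_refl b⟩).sub (havg a ⟨le_refl a, hab⟩)
    refine Tendsto.congr (fun n => ?_) hh
    rw [hval n]; ring
  rw [intervalIntegral.integral_of_le hab]
  exact tendsto_nhds_unique h2 h3

lemma aux_deriv_re {u : ℝ → ℂ} {x : ℝ} (hux : HasDerivAt u (deriv u x) x) :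
    HasDerivAt (fun y => (u y).re) ((deriv u x).re) x := by
  exact Complex.reCLM.hasFDerivAt.comp_hasDerivAt x hux

lemma aux_deriv_im {u : ℝ → ℂ} {x : ℝ} (hux : HasDerivAt u (deriv u x) x) :
    HasDerivAt (fun y => (u y).im) ((deriv u x).im) x := by
  exact Complex.imCLM.hasFDerivAt.comp_hasDerivAt x hux

lemma aux_hasDerivAt_H {u : ℝ → ℂ} (hu1 : Differentiable ℝ u)
    (hu2 : Differentiable ℝ (deriv u)) (x : ℝ) :
    HasDerivAt (fun y => ((starRingEnd ℂ) (u y) * deriv u y).re)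
      (‖deriv u x‖ ^ 2 + ((starRingEnd ℂ) (u x) * deriv (deriv u) x).re) x := by
  have hux : HasDerivAt u (deriv u x) x := (hu1 x).hasDerivAt
  have hux2 : HasDerivAt (deriv u) (deriv (deriv u) x) x := (hu2 x).hasDerivAt
  have hre := aux_deriv_re hux
  have him := aux_deriv_im hux
  have hre2 := aux_deriv_re (u := deriv u) hux2
  have him2 := aux_deriv_im (u := deriv u) hux2
  have hfun : (fun y => ((starRingEnd ℂ) (u y) * deriv u y).re)
      = fun y => (u y).re * (deriv u y).re + (u y).im * (deriv u y).im := by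
    funext y; simp [Complex.mul_re]
  rw [hfun]
  have := (hre.mul hre2).add (him.mul him2)
  refine this.congr_deriv ?_
  simp [Complex.sq_norm, Complex.normSq_apply, Complex.mul_re]
  ring

lemma aux_hasDerivAt_normSq {u : ℝ → ℂ} (hu1 : Differentiable ℝ u) (x : ℝ) :
    HasDerivAt (fun y => ‖u y‖ ^ 2)
      (2 * ((starRingEnd ℂ) (u x) * deriv u x).re) x := by
  have hux : HasDerivAt u (deriv u x) x := (hu1 x).hasDerivAt
  have hre := aux_deriv_re hux
  have him := aux_deriv_im hux
  have hfun : (fun y => ‖u y‖ ^ 2) = fun y => (u y).re * (u y).re + (u y).im * (u y).im := by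
    funext y; simp [Complex.sq_norm, Complex.normSq_apply]
  rw [hfun]
  have := (hre.mul hre).add (him.mul him)
  refine this.congr_deriv ?_
  simp [Complex.mul_re]
  ring

lemma aux_halfline {u : ℝ → ℂ} (hu1 : Differentiable ℝ u)
    (hu2 : Differentiable ℝ (deriv u)) (hcont2 : Continuous (deriv (deriv u)))
    (h1 : Integrable (fun x => ‖u x‖ ^ 2))
    (hφint : Integrable (fun x => |((starRingEnd ℂ) (u x) * deriv (deriv u) x).re|)) :
    ∃ C, ∀ b : ℝ, 0 ≤ b → (∫ x in (0:ℝ)..b, ‖deriv u x‖ ^ 2) ≤ C := by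
  set H : ℝ → ℝ := fun x => ((starRingEnd ℂ) (u x) * deriv u x).re with hH_def
  set φ : ℝ → ℝ := fun x => ((starRingEnd ℂ) (u x) * deriv (deriv u) x).re with hφ_def
  have hu_cont : Continuous u := hu1.continuous
  have hu'_cont : Continuous (deriv u) := hu2.continuous
  have hsq_cont : Continuous (fun x => ‖deriv u x‖ ^ 2) := by continuity
  have hφ_cont : Continuous φ := by
    apply Complex.continuous_re.comp
    exact ((Complex.continuous_conj.comp hu_cont).mul hcont2)
  have hH_cont : Continuous H := by
    apply Complex.continuous_re.comp
    exact ((Complex.continuous_conj.comp hu_cont).mul hu'_cont)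
  set C1 : ℝ := ∫ x, |φ x| with hC1_def
  -- FTC for H
  have hftc : ∀ a b : ℝ, (∫ x in a..b, (‖deriv u x‖ ^ 2 + φ x)) = H b - H a := by
    intro a b
    exact intervalIntegral.integral_eq_sub_of_hasDerivAt
      (fun x _ => aux_hasDerivAt_H hu1 hu2 x)
      ((hsq_cont.add hφ_cont).intervalIntegrable a b)
  have hbound_φ : ∀ a b : ℝ, a ≤ b → |∫ x in a..b, φ x| ≤ C1 := by
    intro a b hab
    calc |∫ x in a..b, φ x| ≤ ∫ x in a..b, |φ x| :=
          intervalIntegral.abs_integral_le_integral_abs hab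
      _ = ∫ x in Ioc a b, |φ x| := intervalIntegral.integral_of_le hab
      _ ≤ C1 := setIntegral_le_integral hφint
          (Eventually.of_forall fun x => abs_nonneg _)
  refine ⟨|H 0| + C1 + C1 + 1, fun b hb => ?_⟩
  by_contra hgt
  push_neg at hgt
  set b₀ := b with hb₀
  -- J x ≥ J b₀ for x ≥ b₀ and consequences
  have hJmono : ∀ x, b₀ ≤ x → (∫ y in (0:ℝ)..b₀, ‖deriv u y‖ ^ 2)
      ≤ ∫ y in (0:ℝ)..x, ‖deriv u y‖ ^ 2 := by
    intro x hx
    have hadj := intervalIntegral.integral_add_adjacent_intervals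
      (hsq_cont.intervalIntegrable (μ := volume) 0 b₀) (hsq_cont.intervalIntegrable (μ := volume) b₀ x)
    have hnn : 0 ≤ ∫ y in b₀..x, ‖deriv u y‖ ^ 2 :=
      intervalIntegral.integral_nonneg hx (fun y _ => sq_nonneg _)
    linarith
  have hHge : ∀ x, b₀ ≤ x → 1 ≤ H x := by
    intro x hx
    have h0x : (0:ℝ) ≤ x := le_trans hb hx
    have e1 : (∫ y in (0:ℝ)..x, (‖deriv u y‖ ^ 2 + φ y)) = H x - H 0 := hftc 0 x
    have e2 : (∫ y in (0:ℝ)..x, (‖deriv u y‖ ^ 2 + φ y))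
        = (∫ y in (0:ℝ)..x, ‖deriv u y‖ ^ 2) + ∫ y in (0:ℝ)..x, φ y :=
      intervalIntegral.integral_add (hsq_cont.intervalIntegrable 0 x)
        (hφ_cont.intervalIntegrable 0 x)
    have e3 := hbound_φ 0 x h0x
    have e4 := hJmono x hx
    have e5 : |H 0| + C1 + C1 + 1 < ∫ y in (0:ℝ)..b₀, ‖deriv u y‖ ^ 2 := hgt
    have := abs_le.1 (le_refl |H 0|)
    have hH0 : -|H 0| ≤ H 0 ∧ H 0 ≤ |H 0| := abs_le.1 (le_refl _)
    have hφx : -C1 ≤ ∫ y in (0:ℝ)..x, φ y ∧ (∫ y in (0:ℝ)..x, φ y) ≤ C1 := abs_le.1 e3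
    linarith [hH0.1, hH0.2, hφx.1, hφx.2]
  -- then ‖u x‖² grows
  have hgrow : ∀ x, b₀ ≤ x → ‖u b₀‖ ^ 2 + 2 * (x - b₀) ≤ ‖u x‖ ^ 2 := by
    intro x hx
    have hftc2 : (∫ y in b₀..x, 2 * H y) = ‖u x‖ ^ 2 - ‖u b₀‖ ^ 2 :=
      intervalIntegral.integral_eq_sub_of_hasDerivAt
        (fun y _ => aux_hasDerivAt_normSq hu1 y)
        ((continuous_const.mul hH_cont).intervalIntegrable b₀ x)
    have hmono : (∫ y in b₀..x, (2:ℝ)) ≤ ∫ y in b₀..x, 2 * H y := by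
      refine intervalIntegral.integral_mono_on hx intervalIntegrable_const
        ((continuous_const.mul hH_cont).intervalIntegrable b₀ x) (fun y hy => ?_)
      have := hHge y hy.1
      linarith
    rw [intervalIntegral.integral_const, smul_eq_mul] at hmono
    linarith
  have hfin : ∀ x, b₀ + 1 ≤ x → 1 ≤ |‖u x‖ ^ 2| := by
    intro x hx
    have := hgrow x (by linarith)
    rw [abs_of_nonneg (sq_nonneg _)]
    nlinarith [sq_nonneg ‖u b₀‖]
  exact aux_not_int_Ioi h1 one_pos hfin

lemma aux_c2_facts {u : ℝ → ℂ} (hu : ContDiff ℝ 2 u) :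
    Differentiable ℝ u ∧ Differentiable ℝ (deriv u) ∧ Continuous (deriv (deriv u)) := by
  rw [← one_add_one_eq_two, contDiff_succ_iff_deriv] at hu
  obtain ⟨hd, -, hcd⟩ := hu
  rw [(zero_add (1 : WithTop ℕ∞)).symm, contDiff_succ_iff_deriv] at hcd
  exact ⟨hd, hcd.1, hcd.2.2.continuous⟩

lemma aux_phi_int {u : ℝ → ℂ} (hu : ContDiff ℝ 2 u)
    (h1 : Integrable (fun x => ‖u x‖ ^ 2))
    (h2 : Integrable (fun x => ‖deriv (deriv u) x‖ ^ 2)) :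
    Integrable (fun x => |((starRingEnd ℂ) (u x) * deriv (deriv u) x).re|) := by
  obtain ⟨hu1, hu2, hcont2⟩ := aux_c2_facts hu
  have hcont : Continuous (fun x => |((starRingEnd ℂ) (u x) * deriv (deriv u) x).re|) := by
    apply Continuous.abs
    exact Complex.continuous_re.comp ((Complex.continuous_conj.comp hu1.continuous).mul hcont2)
  refine Integrable.mono' ((h1.add h2).div_const 2) hcont.aestronglyMeasurable
    (Eventually.of_forall fun x => ?_)
  simp only [Pi.add_apply]
  rw [Real.norm_eq_abs, abs_abs]
  have hb : |((starRingEnd ℂ) (u x) * deriv (deriv u) x).re|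
      ≤ ‖u x‖ * ‖deriv (deriv u) x‖ := by
    calc |((starRingEnd ℂ) (u x) * deriv (deriv u) x).re|
        ≤ ‖(starRingEnd ℂ) (u x) * deriv (deriv u) x‖ := Complex.abs_re_le_norm _
      _ = ‖u x‖ * ‖deriv (deriv u) x‖ := by rw [norm_mul, RCLike.norm_conj]
  nlinarith [sq_nonneg (‖u x‖ - ‖deriv (deriv u) x‖), norm_nonneg (u x),
    norm_nonneg (deriv (deriv u) x)]

lemma aux_deriv_sq_integrable {u : ℝ → ℂ} (hu : ContDiff ℝ 2 u)
    (h1 : Integrable (fun x => ‖u x‖ ^ 2))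
    (h2 : Integrable (fun x => ‖deriv (deriv u) x‖ ^ 2)) :
    Integrable (fun x => ‖deriv u x‖ ^ 2) := by
  obtain ⟨hu1, hu2, hcont2⟩ := aux_c2_facts hu
  obtain ⟨Cp, hCp⟩ := aux_halfline hu1 hu2 hcont2 h1 (aux_phi_int hu h1 h2)
  -- the reflected function
  set v : ℝ → ℂ := fun x => u (-x) with hv_def
  have hv : ContDiff ℝ 2 v := hu.comp (contDiff_neg)
  have hve : deriv v = fun x => -deriv u (-x) := by
    funext x; exact deriv_comp_neg u x
  have hve2 : deriv (deriv v) = fun x => deriv (deriv u) (-x) := by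
    funext x
    rw [hve]
    have : deriv (fun x => -deriv u (-x)) x = -deriv (fun x => deriv u (-x)) x := deriv.neg
    rw [this, deriv_comp_neg (deriv u) x, neg_neg]
  have hneg_mp := Measure.measurePreserving_neg (volume : Measure ℝ)
  have hneg_emb : MeasurableEmbedding (fun x : ℝ => -x) :=
    (Homeomorph.neg ℝ).measurableEmbedding
  have h1v : Integrable (fun x => ‖v x‖ ^ 2) :=
    (hneg_mp.integrable_comp_emb hneg_emb).2 h1
  have h2v : Integrable (fun x => ‖deriv (deriv v) x‖ ^ 2) := by
    rw [hve2]
    exact (hneg_mp.integrable_comp_emb hneg_emb).2 h2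
  obtain ⟨hv1, hv2, hvcont2⟩ := aux_c2_facts hv
  have hφv := aux_phi_int hv h1v h2v
  obtain ⟨Cm, hCm⟩ := aux_halfline hv1 hv2 hvcont2 h1v hφv
  -- transfer : ∫_{-b}^0 ‖u'‖² ≤ Cm
  have hrefl : ∀ b : ℝ, 0 ≤ b → (∫ x in (-b)..(0:ℝ), ‖deriv u x‖ ^ 2) ≤ Cm := by
    intro b hb
    have e1 : (∫ x in (0:ℝ)..b, ‖deriv v x‖ ^ 2) = ∫ x in (0:ℝ)..b, ‖deriv u (-x)‖ ^ 2 := by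
      refine intervalIntegral.integral_congr fun x _ => ?_
      rw [hve]; simp
    have e2 : (∫ x in (0:ℝ)..b, ‖deriv u (-x)‖ ^ 2)
        = ∫ x in (-b)..(-(0:ℝ)), ‖deriv u x‖ ^ 2 :=
      intervalIntegral.integral_comp_neg (fun x => ‖deriv u x‖ ^ 2)
    have := hCp -- unused
    have h3 := hCm b hb
    rw [e1, e2] at h3
    simpa using h3
  have hsq_cont : Continuous (fun x : ℝ => ‖deriv u x‖ ^ 2) := by
    have := hu2.continuous; continuity
  have hfi : ∀ n : ℕ, IntegrableOn (fun x => ‖deriv u x‖ ^ 2) (Ioc (-(n:ℝ)) (n:ℝ)) volume :=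
    fun n => hsq_cont.integrableOn_Ioc
  have ha : Tendsto (fun n : ℕ => -(n:ℝ)) atTop atBot :=
    tendsto_neg_atTop_atBot.comp tendsto_natCast_atTop_atTop
  have hb : Tendsto (fun n : ℕ => (n:ℝ)) atTop atTop := tendsto_natCast_atTop_atTop
  refine integrable_of_intervalIntegral_norm_bounded (Cm + Cp) hfi ha hb ?_
  · refine Eventually.of_forall fun n => ?_
    have hn : (0:ℝ) ≤ (n:ℝ) := Nat.cast_nonneg n
    have e0 : ∀ x : ℝ, ‖‖deriv u x‖ ^ 2‖ = ‖deriv u x‖ ^ 2 := fun x => by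
      rw [Real.norm_eq_abs, abs_of_nonneg (sq_nonneg _)]
    have e1 : (∫ x in (-(n:ℝ))..(n:ℝ), ‖‖deriv u x‖ ^ 2‖)
        = ∫ x in (-(n:ℝ))..(n:ℝ), ‖deriv u x‖ ^ 2 :=
      intervalIntegral.integral_congr fun x _ => e0 x
    rw [e1, ← intervalIntegral.integral_add_adjacent_intervals
      (hsq_cont.intervalIntegrable (μ := volume) (-(n:ℝ)) 0)
      (hsq_cont.intervalIntegrable (μ := volume) 0 (n:ℝ))]
    have := hrefl n hn
    have := hCp n hn
    linarith

/-- product of two L² functions is L¹, abs version -/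
lemma aux_prod_int {u w : ℝ → ℂ} (hu : Continuous u) (hw : Continuous w)
    (h1 : Integrable (fun x => ‖u x‖ ^ 2)) (h2 : Integrable (fun x => ‖w x‖ ^ 2)) :
    Integrable (fun x => |((starRingEnd ℂ) (u x) * w x).re|) := by
  have hcont : Continuous (fun x => |((starRingEnd ℂ) (u x) * w x).re|) :=
    (Complex.continuous_re.comp ((Complex.continuous_conj.comp hu).mul hw)).abs
  refine Integrable.mono' ((h1.add h2).div_const 2) hcont.aestronglyMeasurable
    (Eventually.of_forall fun x => ?_)
  simp only [Pi.add_apply]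
  rw [Real.norm_eq_abs, abs_abs]
  have hb : |((starRingEnd ℂ) (u x) * w x).re| ≤ ‖u x‖ * ‖w x‖ := by
    calc |((starRingEnd ℂ) (u x) * w x).re| ≤ ‖(starRingEnd ℂ) (u x) * w x‖ :=
          Complex.abs_re_le_norm _
      _ = ‖u x‖ * ‖w x‖ := by rw [norm_mul, RCLike.norm_conj]
  nlinarith [sq_nonneg (‖u x‖ - ‖w x‖), norm_nonneg (u x), norm_nonneg (w x)]

lemma aux_abs_int {g : ℝ → ℝ} (hg : Continuous g) (h : Integrable (fun x => |g x|)) :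
    Integrable g :=
  Integrable.mono' h hg.aestronglyMeasurable
    (Eventually.of_forall fun x => by rw [Real.norm_eq_abs])

lemma aux_H_limits {u : ℝ → ℂ} (hu1 : Differentiable ℝ u)
    (hu2 : Differentiable ℝ (deriv u)) (hcont2 : Continuous (deriv (deriv u)))
    (h1 : Integrable (fun x => ‖u x‖ ^ 2))
    (h1' : Integrable (fun x => ‖deriv u x‖ ^ 2))
    (h2 : Integrable (fun x => ‖deriv (deriv u) x‖ ^ 2)) :
    Tendsto (fun x => ((starRingEnd ℂ) (u x) * deriv u x).re) atTop (𝓝 0) ∧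
    Tendsto (fun x => ((starRingEnd ℂ) (u x) * deriv u x).re) atBot (𝓝 0) := by
  set H : ℝ → ℝ := fun x => ((starRingEnd ℂ) (u x) * deriv u x).re with hH_def
  set H' : ℝ → ℝ :=
    fun x => ‖deriv u x‖ ^ 2 + ((starRingEnd ℂ) (u x) * deriv (deriv u) x).re with hH'_def
  have hφcont : Continuous (fun x => ((starRingEnd ℂ) (u x) * deriv (deriv u) x).re) :=
    Complex.continuous_re.comp ((Complex.continuous_conj.comp hu1.continuous).mul hcont2)
  have hHcont : Continuous H :=
    Complex.continuous_re.comp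
      ((Complex.continuous_conj.comp hu1.continuous).mul hu2.continuous)
  have hH'cont : Continuous H' := by
    apply Continuous.add ?_ hφcont
    have := hu2.continuous; continuity
  have hH'int : Integrable H' := by
    refine Integrable.add h1' (aux_abs_int hφcont ?_)
    exact aux_prod_int hu1.continuous hcont2 h1 h2
  have hHint : Integrable H :=
    aux_abs_int hHcont (aux_prod_int hu1.continuous hu2.continuous h1 h1')
  have hftc : ∀ a b : ℝ, (∫ x in a..b, H' x) = H b - H a := fun a b =>
    intervalIntegral.integral_eq_sub_of_hasDerivAt
      (fun x _ => aux_hasDerivAt_H hu1 hu2 x) (hH'cont.intervalIntegrable a b)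
  constructor
  · have hlim : Tendsto (fun b => ∫ x in (0:ℝ)..b, H' x) atTop
        (𝓝 (∫ x in Ioi (0:ℝ), H' x)) :=
      intervalIntegral_tendsto_integral_Ioi 0 hH'int.integrableOn tendsto_id
    have hHt : Tendsto H atTop (𝓝 (H 0 + ∫ x in Ioi (0:ℝ), H' x)) := by
      have := (tendsto_const_nhds (x := H 0) (f := atTop)).add hlim
      refine Tendsto.congr (fun b => ?_) this
      rw [hftc 0 b]; ring
    have := aux_tendsto_zero_atTop hHint hHt
    rwa [this] at hHt
  · have hlim : Tendsto (fun a => ∫ x in a..(0:ℝ), H' x) atBot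
        (𝓝 (∫ x in Iic (0:ℝ), H' x)) :=
      intervalIntegral_tendsto_integral_Iic 0 hH'int.integrableOn tendsto_id
    have hHt : Tendsto H atBot (𝓝 (H 0 - ∫ x in Iic (0:ℝ), H' x)) := by
      have := (tendsto_const_nhds (x := H 0) (f := atBot)).sub hlim
      refine Tendsto.congr (fun a => ?_) this
      rw [hftc a 0]; ring
    have := aux_tendsto_zero_atBot hHint hHt
    rwa [this] at hHt

lemma aux_algebra (W p Vx h : ℝ) (hh : h ≠ 0) (a b cc : ℂ) :
    h^2 * (W * ‖((p/h : ℝ) : ℂ) * a + b‖^2) + (Vx - p^2) * W * ‖a‖^2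
     - (((W:ℝ):ℂ) * ((-(h:ℂ)^2 * cc + (Vx:ℂ) * a) * (starRingEnd ℂ) a)).re
    = h^2 * (W * (2*p/h) * ((starRingEnd ℂ) a * b).re
        + W * (‖b‖^2 + ((starRingEnd ℂ) a * cc).re)) := by
  have e0 : -(h:ℂ)^2 = ((-(h^2) : ℝ) : ℂ) := by push_cast; ring
  rw [e0]
  simp only [Complex.sq_norm, Complex.normSq_apply, Complex.mul_re,
    Complex.mul_im, Complex.add_re, Complex.add_im, Complex.ofReal_re, Complex.ofReal_im,
    Complex.conj_re, Complex.conj_im, Complex.neg_re, Complex.neg_im]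
  field_simp
  ring

set_option maxHeartbeats 1000000 in
/-- The Lithner–Agmon energy identity for `u ∈ C²(ℝ)` with `u, u'' ∈ L²`,
when the Lipschitz phase `Φ` is constant outside a compact set. -/
theorem lithner_agmon_identity
    (h : ℝ) (hh : 0 < h)
    (V : ℝ → ℝ) (hV : Continuous V) (hVbdd : ∃ M, ∀ x, |V x| ≤ M)
    (Φ : ℝ → ℝ) (hΦ : ∃ K : NNReal, LipschitzWith K Φ)
    (hΦconst : ∃ (K : Set ℝ) (c : ℝ), IsCompact K ∧ ∀ x ∉ K, Φ x = c)
    (u : ℝ → ℂ) (hu : ContDiff ℝ 2 u)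
    (huL2 : MemLp u 2 (volume : Measure ℝ))
    (hu''L2 : MemLp (deriv (deriv u)) 2 (volume : Measure ℝ)) :
    h ^ 2 * (∫ x : ℝ, ‖deriv (fun y => (Real.exp (Φ y / h) : ℂ) * u y) x‖ ^ 2)
    + (∫ x : ℝ, (V x - (deriv Φ x) ^ 2) * Real.exp (2 * Φ x / h) * ‖u x‖ ^ 2)
    = (∫ x : ℝ, (Real.exp (2 * Φ x / h) : ℂ) *
        ((-(h : ℂ) ^ 2 * deriv (deriv u) x + (V x : ℂ) * u x) *
          (starRingEnd ℂ) (u x))).re := by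
  obtain ⟨K, hlip⟩ := hΦ
  obtain ⟨S, c, hScomp, hSc⟩ := hΦconst
  obtain ⟨MV, hMV⟩ := hVbdd
  have hMV0 : 0 ≤ MV := le_trans (abs_nonneg _) (hMV 0)
  obtain ⟨hu1, hu2, hcont2⟩ := aux_c2_facts hu
  have husq : Integrable (fun x => ‖u x‖ ^ 2) :=
    (memLp_two_iff_integrable_sq_norm huL2.aestronglyMeasurable).1 huL2
  have hu''sq : Integrable (fun x => ‖deriv (deriv u) x‖ ^ 2) :=
    (memLp_two_iff_integrable_sq_norm hu''L2.aestronglyMeasurable).1 hu''L2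
  have hu'sq : Integrable (fun x => ‖deriv u x‖ ^ 2) :=
    aux_deriv_sq_integrable hu husq hu''sq
  -- boundedness of Φ
  obtain ⟨B₀, hB₀⟩ : ∃ B₀, ∀ x ∈ S, ‖Φ x‖ ≤ B₀ :=
    hScomp.exists_bound_of_continuousOn hlip.continuous.continuousOn
  set B : ℝ := max B₀ |c| with hB_def
  have hB : ∀ x, |Φ x| ≤ B := fun x => by
    by_cases hx : x ∈ S
    · exact le_trans (by simpa [Real.norm_eq_abs] using hB₀ x hx) (le_max_left _ _)
    · rw [hSc x hx]; exact le_max_right _ _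
  set KR : ℝ := (K : ℝ) with hKR_def
  have hKR : 0 ≤ KR := K.coe_nonneg
  have hlipR : ∀ x y : ℝ, |Φ x - Φ y| ≤ KR * |x - y| := fun x y => by
    have := hlip.dist_le_mul x y
    rwa [Real.dist_eq, Real.dist_eq] at this
  -- the weight
  set W : ℝ → ℝ := fun x => Real.exp (2 * Φ x / h) with hW_def
  have hWpos : ∀ x, 0 < W x := fun x => Real.exp_pos _
  set MW : ℝ := Real.exp (2 * B / h) with hMW_def
  have hMW0 : 0 < MW := Real.exp_pos _
  have harg : ∀ x, 2 * Φ x / h ≤ 2 * B / h := fun x => by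
    have := (abs_le.1 (hB x)).2
    gcongr
  have hWle : ∀ x, W x ≤ MW := fun x => Real.exp_le_exp.2 (harg x)
  set LW : ℝ := MW * (2 * KR / h) with hLW_def
  have hLW0 : 0 ≤ LW := by positivity
  have hWlip : ∀ x y : ℝ, |W x - W y| ≤ LW * |x - y| := fun x y => by
    have h1 := aux_exp_sub_le (harg x) (harg y)
    have h2 : |2 * Φ x / h - 2 * Φ y / h| = (2 / h) * |Φ x - Φ y| := by
      rw [div_sub_div_same, ← mul_sub, abs_div, abs_mul, abs_of_pos hh,
        abs_of_nonneg (by norm_num : (0:ℝ) ≤ 2)]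
      ring
    have h3 := hlipR x y
    calc |W x - W y| ≤ MW * |2 * Φ x / h - 2 * Φ y / h| := h1
      _ = MW * ((2 / h) * |Φ x - Φ y|) := by rw [h2]
      _ ≤ MW * ((2 / h) * (KR * |x - y|)) := by
          have h4 : (0:ℝ) ≤ 2 / h := by positivity
          have := mul_le_mul_of_nonneg_left h3 h4
          exact mul_le_mul_of_nonneg_left this hMW0.le
      _ = LW * |x - y| := by rw [hLW_def]; ring
  have hΦcont : Continuous Φ := hlip.continuous
  have hWcont : Continuous W := Real.continuous_exp.comp (by continuity)
  have hΦae : ∀ᵐ x : ℝ, DifferentiableAt ℝ Φ x := hlip.ae_differentiableAt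
  have hΦd_le : ∀ x, |deriv Φ x| ≤ KR := fun x => by
    have := norm_deriv_le_of_lipschitz (x₀ := x) hlip
    rwa [Real.norm_eq_abs] at this
  have hΦmeas : Measurable (deriv Φ) := measurable_deriv Φ
  -- the auxiliary functions H, H', F
  set H : ℝ → ℝ := fun x => ((starRingEnd ℂ) (u x) * deriv u x).re with hH_def
  set H' : ℝ → ℝ :=
    fun x => ‖deriv u x‖ ^ 2 + ((starRingEnd ℂ) (u x) * deriv (deriv u) x).re with hH'_def
  have hHd : ∀ x, HasDerivAt H (H' x) x := aux_hasDerivAt_H hu1 hu2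
  have hHcont : Continuous H :=
    Complex.continuous_re.comp
      ((Complex.continuous_conj.comp hu1.continuous).mul hu2.continuous)
  have hφcont : Continuous (fun x => ((starRingEnd ℂ) (u x) * deriv (deriv u) x).re) :=
    Complex.continuous_re.comp ((Complex.continuous_conj.comp hu1.continuous).mul hcont2)
  have hH'cont : Continuous H' := by
    apply Continuous.add ?_ hφcont
    have := hu2.continuous; continuity
  have hHint : Integrable H :=
    aux_abs_int hHcont (aux_prod_int hu1.continuous hu2.continuous husq hu'sq)
  have hH'int : Integrable H' :=
    hu'sq.add (aux_abs_int hφcont (aux_prod_int hu1.continuous hcont2 husq hu''sq))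
  set F : ℝ → ℝ := fun x => W x * H x with hF_def
  have hFae : ∀ᵐ x : ℝ, HasDerivAt F
      (W x * (2 * deriv Φ x / h) * H x + W x * H' x) x := by
    filter_upwards [hΦae] with x hx
    have hφ' : HasDerivAt (fun y => 2 * Φ y / h) (2 * deriv Φ x / h) x :=
      (hx.hasDerivAt.const_mul 2).div_const h
    exact hφ'.exp.mul (hHd x)
  have hFd_eq : deriv F =ᵐ[volume]
      (fun x => W x * (2 * deriv Φ x / h) * H x + W x * H' x) :=
    hFae.mono fun x hx => hx.deriv
  have hFd_int : Integrable (deriv F) := by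
    have hg : Integrable (fun x => W x * (2 * deriv Φ x / h) * H x + W x * H' x) := by
      apply Integrable.add
      · refine Integrable.mono' ((hHint.abs.const_mul (MW * (2 * KR / h))))
          (((hWcont.measurable.mul
            ((measurable_const.mul hΦmeas).div_const h)).mul
            hHcont.measurable).aestronglyMeasurable)
          (Eventually.of_forall fun x => ?_)
        rw [Real.norm_eq_abs, abs_mul, abs_mul]
        rw [abs_of_pos (hWpos x)]
        have e1 : |2 * deriv Φ x / h| ≤ 2 * KR / h := by
          rw [abs_div, abs_mul, abs_of_pos hh, abs_of_nonneg (by norm_num : (0:ℝ) ≤ 2)]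
          gcongr
          exact hΦd_le x
        calc W x * |2 * deriv Φ x / h| * |H x|
            ≤ MW * (2 * KR / h) * |H x| := by
              refine mul_le_mul ?_ le_rfl (abs_nonneg _) (by positivity)
              exact mul_le_mul (hWle x) e1 (abs_nonneg _) hMW0.le
          _ = MW * (2 * KR / h) * |H x| := rfl
      · refine Integrable.mono' (hH'int.abs.const_mul MW)
          ((hWcont.measurable.mul hH'cont.measurable).aestronglyMeasurable)
          (Eventually.of_forall fun x => ?_)
        rw [Real.norm_eq_abs, abs_mul, abs_of_pos (hWpos x)]
        exact mul_le_mul (hWle x) le_rfl (abs_nonneg _) hMW0.le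
    exact hg.congr hFd_eq.symm
  -- decay of F at infinity
  obtain ⟨hHtop, hHbot⟩ := aux_H_limits hu1 hu2 hcont2 husq hu'sq hu''sq
  have hFbnd : ∀ x, ‖F x‖ ≤ MW * |H x| := fun x => by
    rw [Real.norm_eq_abs, abs_mul, abs_of_pos (hWpos x)]
    exact mul_le_mul (hWle x) le_rfl (abs_nonneg _) hMW0.le
  have hFtop : Tendsto F atTop (𝓝 0) := by
    have t := (hHtop.abs).const_mul MW
    rw [abs_zero, mul_zero] at t
    exact squeeze_zero_norm hFbnd t
  have hFbot : Tendsto F atBot (𝓝 0) := by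
    have t := (hHbot.abs).const_mul MW
    rw [abs_zero, mul_zero] at t
    exact squeeze_zero_norm hFbnd t
  -- FTC for F on [-n, n]
  have hFdiff_ae : ∀ᵐ x : ℝ, DifferentiableAt ℝ F x :=
    hFae.mono fun x hx => hx.differentiableAt
  have hftcF : ∀ n : ℕ, (∫ x in (-(n:ℝ))..(n:ℝ), deriv F x) = F n - F (-n) := by
    intro n
    obtain ⟨MH₀, hMH₀⟩ : ∃ C, ∀ x ∈ Icc (-(n:ℝ)) ((n:ℝ)+1), ‖H x‖ ≤ C :=
      isCompact_Icc.exists_bound_of_continuousOn hHcont.continuousOn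
    obtain ⟨MH'₀, hMH'₀⟩ : ∃ C, ∀ x ∈ Icc (-(n:ℝ)) ((n:ℝ)+1), ‖H' x‖ ≤ C :=
      isCompact_Icc.exists_bound_of_continuousOn hH'cont.continuousOn
    set MH : ℝ := max MH₀ 0 with hMH_def
    set MH' : ℝ := max MH'₀ 0 with hMH'_def
    have hMH : ∀ x ∈ Icc (-(n:ℝ)) ((n:ℝ)+1), |H x| ≤ MH := fun x hx => by
      rw [← Real.norm_eq_abs]; exact le_trans (hMH₀ x hx) (le_max_left _ _)
    have hMH' : ∀ x ∈ Icc (-(n:ℝ)) ((n:ℝ)+1), |H' x| ≤ MH' := fun x hx => by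
      rw [← Real.norm_eq_abs]; exact le_trans (hMH'₀ x hx) (le_max_left _ _)
    have hHlip : ∀ x ∈ Icc (-(n:ℝ)) ((n:ℝ)+1), ∀ y ∈ Icc (-(n:ℝ)) ((n:ℝ)+1),
        |H x - H y| ≤ MH' * |x - y| := by
      intro x hx y hy
      have := (convex_Icc (-(n:ℝ)) ((n:ℝ)+1)).norm_image_sub_le_of_norm_hasDerivWithin_le
        (f := H) (f' := H') (fun z hz => (hHd z).hasDerivWithinAt)
        (fun z hz => by rw [Real.norm_eq_abs]; exact hMH' z hz) hy hx
      rwa [Real.norm_eq_abs, Real.norm_eq_abs] at this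
    refine ftc_lipschitzOn (by exact_mod_cast neg_le_self (Nat.cast_nonneg n))
      (L := MW * MH' + MH * LW) (by positivity) ?_ hFdiff_ae
    intro x hx y hy
    have e1 : F x - F y = W x * (H x - H y) + H y * (W x - W y) := by
      rw [hF_def]; ring
    calc |F x - F y| ≤ |W x * (H x - H y)| + |H y * (W x - W y)| := by
          rw [e1]; exact abs_add_le _ _
      _ ≤ MW * (MH' * |x - y|) + MH * (LW * |x - y|) := by
          rw [abs_mul, abs_mul]
          refine add_le_add ?_ ?_
          · refine mul_le_mul ?_ (hHlip x hx y hy) (abs_nonneg _) hMW0.le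
            rw [abs_of_pos (hWpos x)]; exact hWle x
          · exact mul_le_mul (hMH y hy) (hWlip x y) (abs_nonneg _)
              (le_trans (abs_nonneg _) (hMH y hy))
      _ = (MW * MH' + MH * LW) * |x - y| := by ring
  -- the integral of deriv F vanishes
  have haT : Tendsto (fun n : ℕ => -(n:ℝ)) atTop atBot :=
    tendsto_neg_atTop_atBot.comp tendsto_natCast_atTop_atTop
  have hbT : Tendsto (fun n : ℕ => (n:ℝ)) atTop atTop := tendsto_natCast_atTop_atTop
  have hDF0 : (∫ x, deriv F x) = 0 := by
    have t1 : Tendsto (fun n : ℕ => ∫ x in (-(n:ℝ))..(n:ℝ), deriv F x) atTop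
        (𝓝 (∫ x, deriv F x)) :=
      intervalIntegral_tendsto_integral hFd_int haT hbT
    have t2 : Tendsto (fun n : ℕ => ∫ x in (-(n:ℝ))..(n:ℝ), deriv F x) atTop
        (𝓝 (0 - 0)) := by
      have := (hFtop.comp hbT).sub (hFbot.comp haT)
      refine Tendsto.congr (fun n => ?_) this
      exact (hftcF n).symm
    rw [sub_zero] at t2
    exact tendsto_nhds_unique t1 t2
  -- the weighted function and its derivative
  set v : ℝ → ℂ := fun y => (Real.exp (Φ y / h) : ℂ) * u y with hv_def
  have hvae : ∀ᵐ x : ℝ, deriv v x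
      = (Real.exp (Φ x / h) : ℂ) * (((deriv Φ x / h : ℝ) : ℂ) * u x + deriv u x) := by
    filter_upwards [hΦae] with x hx
    have hw : HasDerivAt (fun y => Real.exp (Φ y / h))
        (Real.exp (Φ x / h) * (deriv Φ x / h)) x := (hx.hasDerivAt.div_const h).exp
    have hd := hw.ofReal_comp.mul (hu1 x).hasDerivAt
    rw [hv_def, show deriv (fun y => (Real.exp (Φ y / h) : ℂ) * u y) x = _ from hd.deriv]
    push_cast
    ring
  set f₁ : ℝ → ℝ := fun x => ‖deriv v x‖ ^ 2 with hf₁_def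
  have hWsq : ∀ x, Real.exp (Φ x / h) ^ 2 = W x := fun x => by
    rw [sq, ← Real.exp_add, hW_def]
    congr 1
    ring
  have hf1ae : f₁ =ᵐ[volume]
      fun x => W x * ‖((deriv Φ x / h : ℝ) : ℂ) * u x + deriv u x‖ ^ 2 := by
    filter_upwards [hvae] with x hx
    show ‖deriv v x‖ ^ 2 = _
    rw [hx, norm_mul, mul_pow, Complex.norm_real, Real.norm_eq_abs,
      abs_of_pos (Real.exp_pos _), hWsq]
  have hf1meas : AEStronglyMeasurable f₁ volume :=
    ((measurable_deriv v).norm.pow_const 2).aestronglyMeasurable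
  have hf1int : Integrable f₁ := by
    have hgint : Integrable
        (fun x => MW * (2 * (KR/h)^2 * ‖u x‖^2 + 2 * ‖deriv u x‖^2)) :=
      (((husq.const_mul (2 * (KR/h)^2)).add (hu'sq.const_mul 2)).const_mul MW)
    refine Integrable.mono' hgint hf1meas ?_
    filter_upwards [hf1ae] with x hx
    rw [Real.norm_eq_abs, abs_of_nonneg (by rw [hf₁_def]; positivity), hx]
    have hz : ‖((deriv Φ x / h : ℝ) : ℂ) * u x + deriv u x‖
        ≤ (KR/h) * ‖u x‖ + ‖deriv u x‖ := by
      refine le_trans (norm_add_le _ _) ?_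
      gcongr
      rw [norm_mul, Complex.norm_real, Real.norm_eq_abs, abs_div, abs_of_pos hh]
      gcongr
      exact hΦd_le x
    have hz0 : 0 ≤ ‖((deriv Φ x / h : ℝ) : ℂ) * u x + deriv u x‖ := norm_nonneg _
    have hWx := hWle x
    have hWx0 := (hWpos x).le
    have hwn : ‖((deriv Φ x / h : ℝ) : ℂ) * u x + deriv u x‖ ^ 2
        ≤ 2 * (KR/h)^2 * ‖u x‖^2 + 2 * ‖deriv u x‖^2 := by
      nlinarith [norm_nonneg (u x), norm_nonneg (deriv u x), sq_nonneg ((KR/h) * ‖u x‖ - ‖deriv u x‖), mul_nonneg (div_nonneg hKR hh.le) (norm_nonneg (u x))]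
    calc W x * ‖((deriv Φ x / h : ℝ) : ℂ) * u x + deriv u x‖ ^ 2
        ≤ MW * (2 * (KR/h)^2 * ‖u x‖^2 + 2 * ‖deriv u x‖^2) := by
          refine mul_le_mul hWx hwn (by positivity) hMW0.le
      _ = MW * (2 * (KR/h)^2 * ‖u x‖^2 + 2 * ‖deriv u x‖^2) := rfl
  -- f₂
  set f₂ : ℝ → ℝ := fun x => (V x - deriv Φ x ^ 2) * W x * ‖u x‖ ^ 2 with hf₂_def
  have hf2meas : AEStronglyMeasurable f₂ volume :=
    (((hV.measurable.sub (hΦmeas.pow_const 2)).mul hWcont.measurable).mul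
      ((hu1.continuous.norm.pow 2).measurable)).aestronglyMeasurable
  have hf2int : Integrable f₂ := by
    refine Integrable.mono' (husq.const_mul ((MV + KR^2) * MW)) hf2meas
      (Eventually.of_forall fun x => ?_)
    rw [Real.norm_eq_abs, hf₂_def]
    have e1 : |V x - deriv Φ x ^ 2| ≤ MV + KR^2 := by
      refine le_trans (abs_sub _ _) ?_
      have e2 : |deriv Φ x ^ 2| = |deriv Φ x| ^ 2 := by
        rw [abs_of_nonneg (sq_nonneg _), sq_abs]
      gcongr
      · exact hMV x
      · rw [e2]
        exact pow_le_pow_left₀ (abs_nonneg _) (hΦd_le x) 2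
    rw [abs_mul, abs_mul, abs_of_pos (hWpos x),
      abs_of_nonneg (by positivity : (0:ℝ) ≤ ‖u x‖ ^ 2)]
    calc |V x - deriv Φ x ^ 2| * W x * ‖u x‖ ^ 2
        ≤ (MV + KR^2) * MW * ‖u x‖ ^ 2 := by
          refine mul_le_mul ?_ le_rfl (by positivity) (by positivity)
          exact mul_le_mul e1 (hWle x) (hWpos x).le (by positivity)
      _ = (MV + KR ^ 2) * MW * ‖u x‖ ^ 2 := rfl
  -- f₃
  set f₃ : ℝ → ℂ := fun x => ((W x : ℝ) : ℂ) *
      ((-(h : ℂ) ^ 2 * deriv (deriv u) x + (V x : ℂ) * u x) *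
        (starRingEnd ℂ) (u x)) with hf₃_def
  have hf3cont : Continuous f₃ := by
    refine (Complex.continuous_ofReal.comp hWcont).mul (Continuous.mul ?_ ?_)
    · exact (continuous_const.mul hcont2).add
        ((Complex.continuous_ofReal.comp hV).mul hu1.continuous)
    · exact Complex.continuous_conj.comp hu1.continuous
  have hf3int : Integrable f₃ := by
    have hgint : Integrable (fun x =>
        MW * (h^2 * ((‖u x‖^2 + ‖deriv (deriv u) x‖^2)/2) + MV * ‖u x‖^2)) :=
      ((((husq.add hu''sq).div_const 2).const_mul (h^2)).add
        (husq.const_mul MV)).const_mul MW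
    refine Integrable.mono' hgint hf3cont.aestronglyMeasurable
      (Eventually.of_forall fun x => ?_)
    rw [hf₃_def]
    rw [norm_mul, norm_mul, Complex.norm_real, Real.norm_eq_abs,
      abs_of_pos (hWpos x), RCLike.norm_conj]
    have e1 : ‖-(h : ℂ) ^ 2 * deriv (deriv u) x + (V x : ℂ) * u x‖
        ≤ h^2 * ‖deriv (deriv u) x‖ + MV * ‖u x‖ := by
      refine le_trans (norm_add_le _ _) ?_
      rw [norm_mul, norm_mul, norm_neg, norm_pow, Complex.norm_real,
        Real.norm_eq_abs, Complex.norm_real, Real.norm_eq_abs,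
        abs_of_pos hh]
      gcongr
      exact hMV x
    have h2u : ‖deriv (deriv u) x‖ * ‖u x‖ ≤ (‖u x‖^2 + ‖deriv (deriv u) x‖^2)/2 := by
      nlinarith [sq_nonneg (‖u x‖ - ‖deriv (deriv u) x‖)]
    calc W x * (‖-(h : ℂ) ^ 2 * deriv (deriv u) x + (V x : ℂ) * u x‖ * ‖u x‖)
        ≤ MW * ((h^2 * ‖deriv (deriv u) x‖ + MV * ‖u x‖) * ‖u x‖) := by
          refine mul_le_mul (hWle x) ?_ (by positivity) hMW0.le
          exact mul_le_mul_of_nonneg_right e1 (norm_nonneg _)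
      _ ≤ MW * (h^2 * ((‖u x‖^2 + ‖deriv (deriv u) x‖^2)/2) + MV * ‖u x‖^2) := by
          refine mul_le_mul_of_nonneg_left ?_ hMW0.le
          have := mul_le_mul_of_nonneg_left h2u (by positivity : (0:ℝ) ≤ h^2)
          nlinarith [norm_nonneg (u x), norm_nonneg (deriv (deriv u) x), sq_nonneg ‖u x‖]
  have hf3re_int : Integrable (fun x => (f₃ x).re) := hf3int.re
  -- the key pointwise identity
  have hkey : ∀ᵐ x : ℝ, h^2 * f₁ x + f₂ x - (f₃ x).re = h^2 * deriv F x := by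
    filter_upwards [hf1ae, hFd_eq] with x e1 e2
    rw [e1, e2]
    exact aux_algebra (W x) (deriv Φ x) (V x) h hh.ne' (u x) (deriv u x)
      (deriv (deriv u) x)
  -- assembling everything
  have hre3 : (∫ x, (f₃ x).re) = (∫ x, f₃ x).re := by
    have := Complex.reCLM.integral_comp_comm hf3int
    simpa using this
  have hint_eq : ∫ x, (h^2 * f₁ x + f₂ x - (f₃ x).re) = h^2 * ∫ x, deriv F x := by
    calc ∫ x, (h^2 * f₁ x + f₂ x - (f₃ x).re) = ∫ x, h^2 * deriv F x :=
          integral_congr_ae hkey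
      _ = h^2 * ∫ x, deriv F x := MeasureTheory.integral_const_mul _ _
  have h1i : Integrable (fun x => h^2 * f₁ x) := hf1int.const_mul (h^2)
  have hsum_int : Integrable (fun x => h^2 * f₁ x + f₂ x) := h1i.add hf2int
  have hsplit : ∫ x, (h^2 * f₁ x + f₂ x - (f₃ x).re)
      = h^2 * (∫ x, f₁ x) + (∫ x, f₂ x) - ∫ x, (f₃ x).re := by
    rw [integral_sub hsum_int hf3re_int, integral_add h1i hf2int,
      MeasureTheory.integral_const_mul]
  rw [hDF0, mul_zero] at hint_eq
  have hfinal : h^2 * (∫ x, f₁ x) + (∫ x, f₂ x) = (∫ x, f₃ x).re := by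
    rw [← hre3]
    linarith [hint_eq, hsplit]
  exact hfinal
end
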